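/- arXiv:1305.4495 — 5 statements merged into one kernel-verified Lean document; each statement's English description precedes it below -/
import Mathlib

section
/- Let P ∈ ℂ[x_1,…,x_n] be a polynomial with P = P_1 ⋯ P_k for polynomials P_1,…,P_k ∈ ℂ[x_1,…,x_n], and let K ⊆ ℝ^n be compact. Then the induced operator P(D) : ℰ(K) → ℰ(K) admits a continuous linear right inverse if and only if for every j ∈ {1,…,k} the induced operator P_j(D) : ℰ(K) → ℰ(K) admits a continuous linear right inverse. -/
/-
Common setup: the space `C^∞(ℝⁿ,ℂ)` of smooth complex-valued functions on `ℝⁿ`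
with the Fréchet topology of uniform convergence of all partial derivatives on
compact sets, the ideal `𝓘_K` of functions flat on a compact set `K`, and the
space of Whitney functions `ℰ(K) = C^∞(ℝⁿ,ℂ)/𝓘_K` with the quotient topology.
-/

noncomputable section
open scoped ContDiff

abbrev Rn (n : ℕ) : Type := Fin n → ℝ

/-- The partial derivative `D_j = ∂/∂x_j` of a complex-valued function on `ℝⁿ`. -/
def pd (n : ℕ) (j : Fin n) (F : Rn n → ℂ) : Rn n → ℂ :=
  fun x => fderiv ℝ F x (Pi.single j 1)

lemma contDiff_pd {n : ℕ} (j : Fin n) {F : Rn n → ℂ} (hF : ContDiff ℝ ∞ F) :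
    ContDiff ℝ ∞ (pd n j F) :=
  (hF.fderiv_right (le_refl _)).clm_apply contDiff_const

/-- The submodule of functions in `ℝⁿ → ℂ` which are `C^∞`-smooth. -/
def SmoothSub (n : ℕ) : Submodule ℂ (Rn n → ℂ) where
  carrier := {F | ContDiff ℝ ∞ F}
  add_mem' := by
    intro a b ha hb
    simp only [Set.mem_setOf_eq] at *
    exact ha.add hb
  zero_mem' := by
    simp only [Set.mem_setOf_eq]
    exact contDiff_const
  smul_mem' := by
    intro c F hF
    simp only [Set.mem_setOf_eq] at *
    exact hF.const_smul c

/-- The space `C^∞(ℝⁿ,ℂ)` of smooth complex-valued functions on `ℝⁿ`. -/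
abbrev SmoothFun (n : ℕ) : Type := ↥(SmoothSub n)

lemma SmoothFun.smooth {n : ℕ} (F : SmoothFun n) : ContDiff ℝ ∞ F.1 := F.2

lemma SmoothFun.smoothNat {n : ℕ} (F : SmoothFun n) (k : ℕ) : ContDiff ℝ k F.1 :=
  F.smooth.of_le (by exact_mod_cast le_top)

/-- The Fréchet topology on `C^∞(ℝⁿ,ℂ)` of uniform convergence of all
derivatives on compact subsets of `ℝⁿ`. -/
instance smoothFunTopology (n : ℕ) : TopologicalSpace (SmoothFun n) :=
  TopologicalSpace.induced
    (fun F : SmoothFun n => fun k : ℕ =>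
      UniformOnFun.ofFun {K : Set (Rn n) | IsCompact K} (iteratedFDeriv ℝ k F.1))
    inferInstance

/-- `F` is flat on `K`: all derivatives of `F` vanish at every point of `K`. -/
def FlatOn (n : ℕ) (F : Rn n → ℂ) (K : Set (Rn n)) : Prop :=
  ∀ (k : ℕ), ∀ x ∈ K, iteratedFDeriv ℝ k F x = 0

/-- The ideal `𝓘_K` of smooth functions flat on `K`. -/
def IdealK (n : ℕ) (K : Set (Rn n)) : Submodule ℂ (SmoothFun n) where
  carrier := {F | FlatOn n F.1 K}
  zero_mem' := by
    intro k x _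
    show iteratedFDeriv ℝ k (fun _ => (0:ℂ)) x = 0
    rw [iteratedFDeriv_zero_fun]; rfl
  add_mem' := by
    intro F G hF hG k x hx
    show iteratedFDeriv ℝ k (F.1 + G.1) x = 0
    rw [iteratedFDeriv_add_apply (F.smoothNat k).contDiffAt (G.smoothNat k).contDiffAt, hF k x hx, hG k x hx, add_zero]
  smul_mem' := by
    intro c F hF k x hx
    show iteratedFDeriv ℝ k (c • F.1) x = 0
    rw [iteratedFDeriv_const_smul_apply (F.smoothNat k).contDiffAt, hF k x hx, smul_zero]

/-- The space of Whitney functions `ℰ(K) = C^∞(ℝⁿ,ℂ)/𝓘_K`, a quotient vector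
space carrying the quotient topology. -/
abbrev WhitneyE (n : ℕ) (K : Set (Rn n)) : Type := SmoothFun n ⧸ IdealK n K

/-- The iterated partial derivative `D^α = D_1^{α_1} ⋯ D_n^{α_n}` for a
multi-index `α ∈ ℕ₀ⁿ`. -/
def Dalpha (n : ℕ) (α : Fin n → ℕ) (F : Rn n → ℂ) : Rn n → ℂ :=
  (List.finRange n).foldr (fun j G => (pd n j)^[α j] G) F

lemma contDiff_iter_pd {n : ℕ} (j : Fin n) (m : ℕ) {F : Rn n → ℂ} (hF : ContDiff ℝ ∞ F) :
    ContDiff ℝ ∞ ((pd n j)^[m] F) := by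
  induction m generalizing F with
  | zero => simpa using hF
  | succ m ih =>
      rw [Function.iterate_succ_apply]
      exact ih (contDiff_pd j hF)

lemma contDiff_Dalpha {n : ℕ} (α : Fin n → ℕ) {F : Rn n → ℂ} (hF : ContDiff ℝ ∞ F) :
    ContDiff ℝ ∞ (Dalpha n α F) := by
  unfold Dalpha
  generalize (List.finRange n) = l
  induction l with
  | nil => simpa using hF
  | cons j l ih => exact contDiff_iter_pd j (α j) ih

/-- The constant-coefficient differential operator `P(D) = Σ_{α} (D^α P(0)/α!) D^α`
associated to a polynomial `P ∈ ℂ[x_1,…,x_n]` (the number `D^α P(0)/α!` is the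
coefficient of the monomial `x^α` in `P`), acting on `C^∞(ℝⁿ,ℂ)`. -/
def PDOp (n : ℕ) (P : MvPolynomial (Fin n) ℂ) (F : SmoothFun n) : SmoothFun n :=
  ⟨fun x => ∑ α ∈ P.support, P.coeff α * Dalpha n (fun j => α j) F.1 x, by
    have h : ContDiff ℝ ∞ fun x => ∑ α ∈ P.support, P.coeff α * Dalpha n (fun j => α j) F.1 x :=
      ContDiff.sum fun α _ => contDiff_const.mul (contDiff_Dalpha _ F.smooth)
    exact h⟩

/-- An operator `T` on `C^∞(ℝⁿ,ℂ)` which maps `𝓘_K` into `𝓘_K` induces an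
operator on `ℰ(K)`; this predicate says that this induced operator on `ℰ(K)`
admits a continuous linear right inverse: there is a continuous linear
`S : ℰ(K) → ℰ(K)` such that applying the induced operator to `S f` (computed on
any representative) gives back `f`. -/
def HasCLRightInv (n : ℕ) (K : Set (Rn n)) (T : SmoothFun n → SmoothFun n) : Prop :=
  ∃ S : WhitneyE n K → WhitneyE n K, Continuous S ∧ IsLinearMap ℂ S ∧
    ∀ (f : WhitneyE n K) (G : SmoothFun n),
      Submodule.Quotient.mk G = S f → (Submodule.Quotient.mk (T G) : WhitneyE n K) = f
-- ===================== Auxiliary development =====================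
section Aux
variable {n : ℕ}

lemma infty_le (m : ℕ) : (m : WithTop ℕ∞) ≤ ∞ := by
  exact_mod_cast (le_top : (m:ℕ∞) ≤ ⊤)

lemma pd_pd {F : Rn n → ℂ} (hF : ContDiff ℝ ∞ F) (i j : Fin n) (x : Rn n) :
    pd n i (pd n j F) x = fderiv ℝ (fderiv ℝ F) x (Pi.single i 1) (Pi.single j 1) := by
  have hdF : ContDiff ℝ ∞ (fderiv ℝ F) := hF.fderiv_right (le_refl _)
  show fderiv ℝ (fun y => fderiv ℝ F y (Pi.single j 1)) x (Pi.single i 1) = _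
  rw [fderiv_clm_apply (hdF.differentiable (by decide) x) (differentiableAt_const _)]
  simp

lemma pd_comm {F : Rn n → ℂ} (hF : ContDiff ℝ ∞ F) (i j : Fin n) :
    pd n i (pd n j F) = pd n j (pd n i F) := by
  funext x
  rw [pd_pd hF i j x, pd_pd hF j i x]
  exact (hF.contDiffAt.isSymmSndFDerivAt (by simp only [minSmoothness_of_isRCLikeNormedField]; exact_mod_cast infty_le 2)) _ _

/-- `pd` bundled as a map on `SmoothFun`. -/
def pdS (j : Fin n) (F : SmoothFun n) : SmoothFun n := ⟨pd n j F.1, contDiff_pd j F.2⟩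

lemma pdS_val (j : Fin n) (F : SmoothFun n) : (pdS j F).1 = pd n j F.1 := rfl

lemma iter_pdS_val (j : Fin n) (m : ℕ) (F : SmoothFun n) :
    ((pdS j)^[m] F).1 = (pd n j)^[m] F.1 := by
  induction m generalizing F with
  | zero => rfl
  | succ m ih => rw [Function.iterate_succ_apply, Function.iterate_succ_apply, ih]; rfl

/-- `Dalpha` bundled as a map on `SmoothFun`. -/
def DalphaS (α : Fin n → ℕ) (F : SmoothFun n) : SmoothFun n :=
  ⟨Dalpha n α F.1, contDiff_Dalpha α F.2⟩

lemma DalphaS_val (α : Fin n → ℕ) (F : SmoothFun n) :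
    (DalphaS α F).1 = Dalpha n α F.1 := rfl

lemma DalphaS_eq_foldr (α : Fin n → ℕ) (F : SmoothFun n) :
    DalphaS α F = (List.finRange n).foldr (fun j G => (pdS j)^[α j] G) F := by
  apply Subtype.ext
  show Dalpha n α F.1 = _
  unfold Dalpha
  generalize (List.finRange n) = l
  induction l generalizing F with
  | nil => rfl
  | cons j t ih => simp only [List.foldr_cons, iter_pdS_val, ih]

end Aux
section Aux2
variable {n : ℕ}

lemma pdS_add (j : Fin n) (F G : SmoothFun n) : pdS j (F + G) = pdS j F + pdS j G := by
  apply Subtype.ext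
  show pd n j (F.1 + G.1) = pd n j F.1 + pd n j G.1
  funext x
  show fderiv ℝ (fun y => F.1 y + G.1 y) x (Pi.single j 1) = _
  rw [fderiv_fun_add (F.smooth.differentiable (by decide) x) (G.smooth.differentiable (by decide) x)]
  rfl

lemma pdS_smul (j : Fin n) (c : ℂ) (F : SmoothFun n) : pdS j (c • F) = c • pdS j F := by
  apply Subtype.ext
  show pd n j (c • F.1) = c • pd n j F.1
  funext x
  show fderiv ℝ (fun y => c • F.1 y) x (Pi.single j 1) = _
  rw [fderiv_fun_const_smul (F.smooth.differentiable (by decide) x) c]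
  rfl

lemma pdS_comm (i j : Fin n) (F : SmoothFun n) : pdS i (pdS j F) = pdS j (pdS i F) :=
  Subtype.ext (pd_comm F.smooth i j)

lemma pdS_comm_iter (i j : Fin n) (m : ℕ) (F : SmoothFun n) :
    pdS i ((pdS j)^[m] F) = (pdS j)^[m] (pdS i F) := by
  induction m generalizing F with
  | zero => rfl
  | succ m ih =>
      rw [Function.iterate_succ_apply', Function.iterate_succ_apply', pdS_comm, ih]

lemma pdS_comm_foldr (i : Fin n) (α : Fin n → ℕ) (l : List (Fin n)) (F : SmoothFun n) :
    pdS i (l.foldr (fun j G => (pdS j)^[α j] G) F)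
      = l.foldr (fun j G => (pdS j)^[α j] G) (pdS i F) := by
  induction l generalizing F with
  | nil => rfl
  | cons j t ih => simp only [List.foldr_cons, pdS_comm_iter, ih]

lemma iter_comm_foldr (i : Fin n) (m : ℕ) (α : Fin n → ℕ) (l : List (Fin n)) (F : SmoothFun n) :
    (pdS i)^[m] (l.foldr (fun j G => (pdS j)^[α j] G) F)
      = l.foldr (fun j G => (pdS j)^[α j] G) ((pdS i)^[m] F) := by
  induction m generalizing F with
  | zero => rfl
  | succ m ih =>
      rw [Function.iterate_succ_apply, Function.iterate_succ_apply, pdS_comm_foldr, ih]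

lemma DalphaS_comp (α β : Fin n → ℕ) (F : SmoothFun n) :
    DalphaS α (DalphaS β F) = DalphaS (fun j => α j + β j) F := by
  rw [DalphaS_eq_foldr, DalphaS_eq_foldr, DalphaS_eq_foldr]
  generalize (List.finRange n) = l
  induction l generalizing F with
  | nil => rfl
  | cons j t ih =>
      simp only [List.foldr_cons]
      rw [← iter_comm_foldr j (β j) α t (t.foldr (fun j G => (pdS j)^[β j] G) F),
        ← Function.iterate_add_apply, ih]

lemma iter_pdS_add (j : Fin n) (m : ℕ) (F G : SmoothFun n) :
    (pdS j)^[m] (F + G) = (pdS j)^[m] F + (pdS j)^[m] G := by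
  induction m generalizing F G with
  | zero => rfl
  | succ m ih => simp only [Function.iterate_succ_apply]; rw [pdS_add, ih]

lemma iter_pdS_smul (j : Fin n) (m : ℕ) (c : ℂ) (F : SmoothFun n) :
    (pdS j)^[m] (c • F) = c • (pdS j)^[m] F := by
  induction m generalizing F with
  | zero => rfl
  | succ m ih => simp only [Function.iterate_succ_apply]; rw [pdS_smul, ih]

lemma DalphaS_add (α : Fin n → ℕ) (F G : SmoothFun n) :
    DalphaS α (F + G) = DalphaS α F + DalphaS α G := by
  rw [DalphaS_eq_foldr, DalphaS_eq_foldr, DalphaS_eq_foldr]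
  generalize (List.finRange n) = l
  induction l generalizing F G with
  | nil => rfl
  | cons j t ih => simp only [List.foldr_cons]; rw [ih, iter_pdS_add]

lemma DalphaS_smul (α : Fin n → ℕ) (c : ℂ) (F : SmoothFun n) :
    DalphaS α (c • F) = c • DalphaS α F := by
  rw [DalphaS_eq_foldr, DalphaS_eq_foldr]
  generalize (List.finRange n) = l
  induction l generalizing F with
  | nil => rfl
  | cons j t ih => simp only [List.foldr_cons]; rw [ih, iter_pdS_smul]

end Aux2
section Aux3
variable {n : ℕ}
open MvPolynomial

lemma PDOp_eq (P : MvPolynomial (Fin n) ℂ) (F : SmoothFun n) :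
    PDOp n P F = ∑ α ∈ P.support, P.coeff α • DalphaS (fun j => α j) F := by
  apply Subtype.ext
  show (fun x => ∑ α ∈ P.support, P.coeff α * Dalpha n (fun j => α j) F.1 x) = _
  rw [AddSubmonoidClass.coe_finset_sum]
  funext x
  rw [Finset.sum_apply]
  congr 1

lemma PDOp_eq' (P : MvPolynomial (Fin n) ℂ) (F : SmoothFun n) :
    PDOp n P F = (AddMonoidAlgebra.coeff P).sum (fun α c => c • DalphaS (fun j => α j) F) := by
  rw [PDOp_eq]; rfl

lemma PDOp_add_poly (A B : MvPolynomial (Fin n) ℂ) (F : SmoothFun n) :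
    PDOp n (A + B) F = PDOp n A F + PDOp n B F := by
  rw [PDOp_eq', PDOp_eq', PDOp_eq', AddMonoidAlgebra.coeff_add]
  exact Finsupp.sum_add_index' (fun α => zero_smul _ _) (fun α c d => add_smul c d _)

lemma PDOp_add_fun (P : MvPolynomial (Fin n) ℂ) (F G : SmoothFun n) :
    PDOp n P (F + G) = PDOp n P F + PDOp n P G := by
  rw [PDOp_eq, PDOp_eq, PDOp_eq, ← Finset.sum_add_distrib]
  exact Finset.sum_congr rfl fun α _ => by rw [DalphaS_add, smul_add]

lemma PDOp_smul_fun (P : MvPolynomial (Fin n) ℂ) (c : ℂ) (F : SmoothFun n) :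
    PDOp n P (c • F) = c • PDOp n P F := by
  rw [PDOp_eq, PDOp_eq, Finset.smul_sum]
  exact Finset.sum_congr rfl fun α _ => by rw [DalphaS_smul, smul_comm]

lemma PDOp_monomial (u : Fin n →₀ ℕ) (c : ℂ) (F : SmoothFun n) :
    PDOp n (monomial u c) F = c • DalphaS (fun j => u j) F := by
  rw [PDOp_eq']
  exact sum_monomial_eq (by rw [zero_smul])

lemma DalphaS_zero (F : SmoothFun n) : DalphaS (fun _ : Fin n => 0) F = F := by
  rw [DalphaS_eq_foldr]
  generalize (List.finRange n) = l
  induction l with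
  | nil => rfl
  | cons j t ih => simp only [List.foldr_cons, Function.iterate_zero, id]; exact ih

lemma PDOp_one (F : SmoothFun n) : PDOp n 1 F = F := by
  have h1 : (1 : MvPolynomial (Fin n) ℂ) = monomial 0 1 := by
    rw [MvPolynomial.monomial_zero', MvPolynomial.C_1]
  rw [h1, PDOp_monomial, one_smul]
  have : (fun j => (0 : Fin n →₀ ℕ) j) = (fun _ : Fin n => 0) := by funext j; rfl
  rw [this, DalphaS_zero]

lemma PDOp_mul (P Q : MvPolynomial (Fin n) ℂ) (F : SmoothFun n) :
    PDOp n (P * Q) F = PDOp n P (PDOp n Q F) := by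
  induction P using MvPolynomial.induction_on' generalizing Q F with
  | add p q hp hq =>
      rw [add_mul, PDOp_add_poly, PDOp_add_poly, hp, hq]
  | monomial u a =>
      induction Q using MvPolynomial.induction_on' generalizing F with
      | add p q hp hq =>
          rw [mul_add, PDOp_add_poly, PDOp_add_poly, PDOp_add_fun, hp, hq]
      | monomial v b =>
          rw [monomial_mul, PDOp_monomial, PDOp_monomial, PDOp_monomial, DalphaS_smul,
            smul_smul, DalphaS_comp]
          congr 1

end Aux3
section Aux4
variable {n : ℕ} {K : Set (Rn n)}

lemma pdS_mem (j : Fin n) {F : SmoothFun n} (hF : F ∈ IdealK n K) : pdS j F ∈ IdealK n K := by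
  have hF' : FlatOn n F.1 K := hF
  show FlatOn n (pd n j F.1) K
  intro k x hx
  have hdF : ContDiff ℝ ∞ (fderiv ℝ F.1) := F.smooth.fderiv_right (le_refl _)
  set g : (Rn n →L[ℝ] ℂ) →L[ℝ] ℂ := ContinuousLinearMap.apply ℝ ℂ (Pi.single j 1) with hg
  have hcomp : pd n j F.1 = ⇑g ∘ (fderiv ℝ F.1) := funext fun y => rfl
  rw [hcomp, g.iteratedFDeriv_comp_left hdF.contDiffAt (infty_le k)]
  have hz : iteratedFDeriv ℝ k (fderiv ℝ F.1) x = 0 := by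
    have h := iteratedFDeriv_succ_eq_comp_right (𝕜 := ℝ) (n := k) (f := F.1) (x := x)
    rw [hF' (k+1) x hx] at h
    have h2 : (continuousMultilinearCurryRightEquiv' ℝ k (Rn n) ℂ).symm
        (iteratedFDeriv ℝ k (fderiv ℝ F.1) x) = 0 := h.symm
    exact (continuousMultilinearCurryRightEquiv' ℝ k (Rn n) ℂ).symm.map_eq_zero_iff.1 h2
  rw [hz]
  ext m
  simp

lemma iter_pdS_mem (j : Fin n) (m : ℕ) {F : SmoothFun n} (hF : F ∈ IdealK n K) :
    (pdS j)^[m] F ∈ IdealK n K := by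
  induction m generalizing F with
  | zero => exact hF
  | succ m ih => rw [Function.iterate_succ_apply]; exact ih (pdS_mem j hF)

lemma DalphaS_mem (α : Fin n → ℕ) {F : SmoothFun n} (hF : F ∈ IdealK n K) :
    DalphaS α F ∈ IdealK n K := by
  rw [DalphaS_eq_foldr]
  generalize (List.finRange n) = l
  induction l generalizing F with
  | nil => exact hF
  | cons j t ih => exact iter_pdS_mem j (α j) (ih hF)

lemma PDOp_mem (P : MvPolynomial (Fin n) ℂ) {F : SmoothFun n} (hF : F ∈ IdealK n K) :
    PDOp n P F ∈ IdealK n K := by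
  rw [PDOp_eq]
  exact Submodule.sum_mem _ fun α _ => Submodule.smul_mem _ _ (DalphaS_mem _ hF)

end Aux4
section Aux5
variable {n : ℕ}

lemma cont_iFD (k : ℕ) :
    Continuous (fun F : SmoothFun n =>
      UniformOnFun.ofFun {K : Set (Rn n) | IsCompact K} (iteratedFDeriv ℝ k F.1)) := by
  have h : Continuous (fun F : SmoothFun n => fun k : ℕ =>
      UniformOnFun.ofFun {K : Set (Rn n) | IsCompact K} (iteratedFDeriv ℝ k F.1)) :=
    continuous_induced_dom
  exact (continuous_apply k).comp h

lemma cont_pdS (j : Fin n) : Continuous (pdS j : SmoothFun n → SmoothFun n) := by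
  apply continuous_induced_rng.2
  apply continuous_pi
  intro k
  set e := continuousMultilinearCurryRightEquiv' ℝ k (Rn n) ℂ with he
  set g : (Rn n →L[ℝ] ℂ) →L[ℝ] ℂ := ContinuousLinearMap.apply ℝ ℂ (Pi.single j 1) with hg
  set gc := ContinuousLinearMap.compContinuousMultilinearMapL ℝ
    (fun _ : Fin k => Rn n) (Rn n →L[ℝ] ℂ) ℂ g with hgc
  set L : ContinuousMultilinearMap ℝ (fun _ : Fin (k+1) => Rn n) ℂ →
      ContinuousMultilinearMap ℝ (fun _ : Fin k => Rn n) ℂ := fun T => gc (e T) with hL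
  have hLu : UniformContinuous L := by
    let φ : ContinuousMultilinearMap ℝ (fun _ : Fin k => Rn n) (Rn n →L[ℝ] ℂ) →+
        ContinuousMultilinearMap ℝ (fun _ : Fin k => Rn n) ℂ :=
      { toFun := fun T => g.compContinuousMultilinearMap T
        map_zero' := by ext; simp
        map_add' := by intros; ext; simp }
    have hφ : UniformContinuous φ :=
      AddMonoidHomClass.uniformContinuous_of_bound φ ‖g‖ fun T => g.norm_compContinuousMultilinearMap_le T
    exact hφ.comp e.isometry.uniformContinuous
  have key : ∀ F : SmoothFun n,
      iteratedFDeriv ℝ k (pd n j F.1) = L ∘ (iteratedFDeriv ℝ (k+1) F.1) := by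
    intro F
    funext x
    have hdF : ContDiff ℝ ∞ (fderiv ℝ F.1) := F.smooth.fderiv_right (le_refl _)
    have hcomp : pd n j F.1 = ⇑g ∘ (fderiv ℝ F.1) := funext fun y => rfl
    have h1 : e (iteratedFDeriv ℝ (k+1) F.1 x) = iteratedFDeriv ℝ k (fderiv ℝ F.1) x := by
      rw [iteratedFDeriv_succ_eq_comp_right]
      exact e.apply_symm_apply _
    rw [hcomp, g.iteratedFDeriv_comp_left hdF.contDiffAt (infty_le k)]
    show _ = gc (e (iteratedFDeriv ℝ (k+1) F.1 x))
    rw [h1]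
    rfl
  have heq : (fun F : SmoothFun n =>
        UniformOnFun.ofFun {K : Set (Rn n) | IsCompact K} (iteratedFDeriv ℝ k (pd n j F.1)))
      = (fun u => UniformOnFun.ofFun {K : Set (Rn n) | IsCompact K}
            (L ∘ (UniformOnFun.toFun {K : Set (Rn n) | IsCompact K} u)))
        ∘ (fun F : SmoothFun n =>
            UniformOnFun.ofFun {K : Set (Rn n) | IsCompact K} (iteratedFDeriv ℝ (k+1) F.1)) := by
    funext F
    show UniformOnFun.ofFun _ (iteratedFDeriv ℝ k (pd n j F.1)) = _
    rw [key F]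
    rfl
  exact heq ▸ ((UniformOnFun.postcomp_uniformContinuous hLu).continuous.comp (cont_iFD (k+1)))

instance : ContinuousAdd (SmoothFun n) := by
  constructor
  apply continuous_induced_rng.2
  apply continuous_pi
  intro k
  have heq : (fun p : SmoothFun n × SmoothFun n =>
        UniformOnFun.ofFun {K : Set (Rn n) | IsCompact K} (iteratedFDeriv ℝ k ((p.1 + p.2).1)))
      = fun p : SmoothFun n × SmoothFun n =>
        UniformOnFun.ofFun {K : Set (Rn n) | IsCompact K} (iteratedFDeriv ℝ k p.1.1)
        + UniformOnFun.ofFun {K : Set (Rn n) | IsCompact K} (iteratedFDeriv ℝ k p.2.1) := by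
    funext p
    have : iteratedFDeriv ℝ k ((p.1 + p.2).1)
        = fun x => iteratedFDeriv ℝ k p.1.1 x + iteratedFDeriv ℝ k p.2.1 x := by
      funext x
      exact iteratedFDeriv_add_apply (p.1.smoothNat k).contDiffAt (p.2.smoothNat k).contDiffAt
    rw [this]
    rfl
  exact heq ▸ ((cont_iFD k).comp continuous_fst).add ((cont_iFD k).comp continuous_snd)

lemma cont_smulS (c : ℂ) : Continuous (fun F : SmoothFun n => c • F) := by
  apply continuous_induced_rng.2
  apply continuous_pi
  intro k
  have hLu : UniformContinuous
      (fun T : ContinuousMultilinearMap ℝ (fun _ : Fin k => Rn n) ℂ => c • T) :=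
    uniformContinuous_const_smul c
  have heq : (fun F : SmoothFun n =>
        UniformOnFun.ofFun {K : Set (Rn n) | IsCompact K} (iteratedFDeriv ℝ k ((c • F).1)))
      = (fun u => UniformOnFun.ofFun {K : Set (Rn n) | IsCompact K}
            ((fun T => c • T) ∘ (UniformOnFun.toFun {K : Set (Rn n) | IsCompact K} u)))
        ∘ (fun F : SmoothFun n =>
            UniformOnFun.ofFun {K : Set (Rn n) | IsCompact K} (iteratedFDeriv ℝ k F.1)) := by
    funext F
    have : iteratedFDeriv ℝ k ((c • F).1) = fun x => c • iteratedFDeriv ℝ k F.1 x := by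
      funext x
      exact iteratedFDeriv_const_smul_apply (F.smoothNat k).contDiffAt
    show UniformOnFun.ofFun _ (iteratedFDeriv ℝ k ((c • F).1)) = _
    rw [this]
    rfl
  exact heq ▸ (UniformOnFun.postcomp_uniformContinuous hLu).continuous.comp (cont_iFD k)

lemma cont_DalphaS (α : Fin n → ℕ) : Continuous (DalphaS α : SmoothFun n → SmoothFun n) := by
  have h : (DalphaS α : SmoothFun n → SmoothFun n)
      = fun F => (List.finRange n).foldr (fun j G => (pdS j)^[α j] G) F :=
    funext (DalphaS_eq_foldr α)
  rw [h]
  generalize (List.finRange n) = l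
  induction l with
  | nil => exact continuous_id
  | cons j t ih =>
      simp only [List.foldr_cons]
      exact ((cont_pdS j).iterate (α j)).comp ih

lemma cont_PDOp (P : MvPolynomial (Fin n) ℂ) : Continuous (PDOp n P) := by
  have h : PDOp n P = fun F => ∑ α ∈ P.support, P.coeff α • DalphaS (fun j => α j) F :=
    funext (PDOp_eq P)
  rw [h]
  exact continuous_finset_sum _ fun α _ => (cont_smulS _).comp (cont_DalphaS _)

end Aux5
section Aux6
variable {n : ℕ} {K : Set (Rn n)}

/-- `PDOp` as a linear map. -/
def PDOpL (P : MvPolynomial (Fin n) ℂ) : SmoothFun n →ₗ[ℂ] SmoothFun n where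
  toFun := PDOp n P
  map_add' := PDOp_add_fun P
  map_smul' := fun c F => PDOp_smul_fun P c F

/-- The operator induced by `PDOp` on the Whitney space. -/
def PDQuot (P : MvPolynomial (Fin n) ℂ) (K : Set (Rn n)) :
    WhitneyE n K →ₗ[ℂ] WhitneyE n K :=
  Submodule.mapQ (IdealK n K) (IdealK n K) (PDOpL P) (fun _ hF => PDOp_mem P hF)

lemma PDQuot_mk (P : MvPolynomial (Fin n) ℂ) (F : SmoothFun n) :
    PDQuot P K (Submodule.Quotient.mk F) = Submodule.Quotient.mk (PDOp n P F) := by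
  unfold PDQuot
  rfl

lemma cont_mk : Continuous (Submodule.Quotient.mk : SmoothFun n → WhitneyE n K) :=
  continuous_quot_mk

lemma cont_PDQuot (P : MvPolynomial (Fin n) ℂ) : Continuous (PDQuot P K) := by
  have h : Continuous ((PDQuot P K) ∘ (Submodule.Quotient.mk : SmoothFun n → WhitneyE n K)) := by
    have : ((PDQuot P K) ∘ (Submodule.Quotient.mk : SmoothFun n → WhitneyE n K))
        = (Submodule.Quotient.mk : SmoothFun n → WhitneyE n K) ∘ (PDOp n P) := by
      funext F
      exact PDQuot_mk P F
    rw [this]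
    exact cont_mk.comp (cont_PDOp P)
  exact isQuotientMap_quot_mk.continuous_iff.mpr h

lemma PDOp_congr (P : MvPolynomial (Fin n) ℂ) {F G : SmoothFun n}
    (h : (Submodule.Quotient.mk F : WhitneyE n K) = Submodule.Quotient.mk G) :
    (Submodule.Quotient.mk (PDOp n P F) : WhitneyE n K) = Submodule.Quotient.mk (PDOp n P G) := by
  rw [Submodule.Quotient.eq] at h ⊢
  have : PDOp n P F - PDOp n P G = PDOp n P (F - G) := (map_sub (PDOpL P) F G).symm
  rw [this]
  exact PDOp_mem P h

lemma clri_one : HasCLRightInv n K (PDOp n 1) := by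
  refine ⟨id, continuous_id, ⟨fun x y => rfl, fun c x => rfl⟩, ?_⟩
  intro f G h
  rw [PDOp_one]
  exact h

lemma clri_left {P Q : MvPolynomial (Fin n) ℂ}
    (h : HasCLRightInv n K (PDOp n (P * Q))) : HasCLRightInv n K (PDOp n P) := by
  obtain ⟨S, hc, hl, hS⟩ := h
  refine ⟨(PDQuot Q K) ∘ S, (cont_PDQuot Q).comp hc, ?_, ?_⟩
  · exact ⟨fun x y => by simp [hl.map_add, map_add], fun c x => by simp [hl.map_smul, map_smul]⟩
  · intro f G hG
    obtain ⟨G₀, hG₀⟩ := Submodule.Quotient.mk_surjective (IdealK n K) (S f)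
    have h1 : (Submodule.Quotient.mk G : WhitneyE n K) = Submodule.Quotient.mk (PDOp n Q G₀) := by
      rw [hG]
      show PDQuot Q K (S f) = _
      rw [← hG₀, PDQuot_mk]
    have h2 := PDOp_congr P h1
    rw [h2, ← PDOp_mul, hS f G₀ hG₀]

lemma clri_mul {P Q : MvPolynomial (Fin n) ℂ}
    (hP : HasCLRightInv n K (PDOp n P)) (hQ : HasCLRightInv n K (PDOp n Q)) :
    HasCLRightInv n K (PDOp n (P * Q)) := by
  obtain ⟨SP, hcP, hlP, hSP⟩ := hP
  obtain ⟨SQ, hcQ, hlQ, hSQ⟩ := hQ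
  refine ⟨SQ ∘ SP, hcQ.comp hcP, ?_, ?_⟩
  · exact ⟨fun x y => by simp [hlP.map_add, hlQ.map_add],
      fun c x => by simp [hlP.map_smul, hlQ.map_smul]⟩
  · intro f G hG
    have h1 : (Submodule.Quotient.mk (PDOp n Q G) : WhitneyE n K) = SP f := hSQ (SP f) G hG
    have h2 := hSP f (PDOp n Q G) h1
    rw [PDOp_mul]
    exact h2

end Aux6
/-- If `P = P_1 ⋯ P_k` and `K ⊆ ℝⁿ` is compact, then
`P(D) : ℰ(K) → ℰ(K)` admits a continuous linear right inverse iff every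
`P_j(D) : ℰ(K) → ℰ(K)` does. -/
theorem stmt2 (n k : ℕ) (P : MvPolynomial (Fin n) ℂ) (Ps : Fin k → MvPolynomial (Fin n) ℂ)
    (hP : P = ∏ j, Ps j) (K : Set (Rn n)) (hK : IsCompact K) :
    HasCLRightInv n K (PDOp n P) ↔ ∀ j : Fin k, HasCLRightInv n K (PDOp n (Ps j)) := by
  constructor
  · intro h j
    have hPj : P = Ps j * ∏ i ∈ Finset.univ.erase j, Ps i := by
      rw [hP, ← Finset.mul_prod_erase Finset.univ Ps (Finset.mem_univ j)]
    rw [hPj] at h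
    exact clri_left h
  · intro h
    have key : ∀ s : Finset (Fin k), HasCLRightInv n K (PDOp n (∏ j ∈ s, Ps j)) := by
      intro s
      induction s using Finset.induction_on with
      | empty => rw [Finset.prod_empty]; exact clri_one
      | insert j s hj ih => rw [Finset.prod_insert hj]; exact clri_mul (h _) ih
    rw [hP]
    exact key Finset.univ
end
end

section
/- Let j ∈ {1,…,n} and λ ∈ ℂ. Then for every F ∈ C^∞(ℝ^n,ℂ), the function S̃_{j,λ}F is smooth and (D_j − λ)(S̃_{j,λ}F) = F; that is, S̃_{j,λ} is a linear right inverse for the operator D_j − λ : C^∞(ℝ^n,ℂ) → C^∞(ℝ^n,ℂ). -/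
/-
Common setup: the space `C^∞(ℝⁿ,ℂ)` of smooth complex-valued functions on `ℝⁿ`
with the Fréchet topology of uniform convergence of all partial derivatives on
compact sets, the ideal `𝓘_K` of functions flat on a compact set `K`, and the
space of Whitney functions `ℰ(K) = C^∞(ℝⁿ,ℂ)/𝓘_K` with the quotient topology.
-/

noncomputable section
open scoped ContDiff

/-- The operator `S̃_{j,λ}`:
`(S̃_{j,λ}F)(x) = ∫_0^{x_j} F(x^{(j,t)}) e^{λ(x_j - t)} dt`, where
`x^{(j,t)} = (x_1,…,x_{j-1},t,x_{j+1},…,x_n)`. -/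
def Stilde (n : ℕ) (j : Fin n) (lam : ℂ) (F : Rn n → ℂ) : Rn n → ℂ :=
  fun x => ∫ t in (0:ℝ)..(x j), F (Function.update x j t) * Complex.exp (lam * (x j - t))

section AuxPrim

open intervalIntegral

variable {n : ℕ} (j : Fin n)

/-- The continuous linear map that zeroes out the `j`-th coordinate. -/
def resetCLM (n : ℕ) (j : Fin n) : Rn n →L[ℝ] Rn n :=
  ContinuousLinearMap.pi (fun i => if i = j then 0 else ContinuousLinearMap.proj i)

lemma resetCLM_apply (x : Rn n) (i : Fin n) :
    resetCLM n j x i = if i = j then 0 else x i := by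
  simp only [resetCLM, ContinuousLinearMap.pi_apply]
  split <;> rfl

lemma update_eq (x : Rn n) (t : ℝ) :
    Function.update x j t = resetCLM n j x + t • (Pi.single j (1:ℝ) : Rn n) := by
  funext i
  by_cases h : i = j
  · subst h
    simp [resetCLM_apply, Function.update_self]
  · simp [resetCLM_apply, h, Function.update_of_ne h, Pi.single_eq_of_ne h]

lemma continuous_update_pair :
    Continuous (fun p : Rn n × ℝ => Function.update p.1 j p.2) := by
  have h : (fun p : Rn n × ℝ => Function.update p.1 j p.2)
      = fun p => resetCLM n j p.1 + p.2 • Pi.single j (1:ℝ) := by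
    funext p; exact update_eq j p.1 p.2
  rw [h]
  exact ((resetCLM n j).continuous.comp continuous_fst).add
    (continuous_snd.smul continuous_const)

lemma continuous_update_slice (x : Rn n) :
    Continuous (fun t : ℝ => Function.update x j t) :=
  (continuous_update_pair j).comp (continuous_const.prodMk continuous_id)

lemma hasFDerivAt_update' (t : ℝ) (x : Rn n) :
    HasFDerivAt (fun y : Rn n => Function.update y j t) (resetCLM n j) x := by
  have h : (fun y : Rn n => Function.update y j t)
      = fun y => resetCLM n j y + t • (Pi.single j (1:ℝ) : Rn n) := by
    funext y; exact update_eq j y t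
  rw [h]
  exact (resetCLM n j).hasFDerivAt.add_const _

/-- The primitive along the `j`-th coordinate. -/
def prim (n : ℕ) (j : Fin n) {G : Type} [NormedAddCommGroup G] [NormedSpace ℝ G]
    (g : Rn n → G) : Rn n → G :=
  fun x => ∫ t in (0:ℝ)..(x j), g (Function.update x j t)

/-- The "partial" derivative of `g` ignoring the `j`-th coordinate. -/
def gone (n : ℕ) (j : Fin n) {G : Type} [NormedAddCommGroup G] [NormedSpace ℝ G]
    (g : Rn n → G) : Rn n → (Rn n →L[ℝ] G) :=
  fun z => (fderiv ℝ g z).comp (resetCLM n j)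

variable {G : Type} [NormedAddCommGroup G] [NormedSpace ℝ G] [CompleteSpace G]

set_option synthInstance.maxHeartbeats 1000000

lemma continuous_comp_update_slice {g : Rn n → G} (hgc : Continuous g) (x : Rn n) :
    Continuous (fun t : ℝ => g (Function.update x j t)) :=
  hgc.comp (continuous_update_slice j x)

lemma continuous_gone {g : Rn n → G} (hg : ContDiff ℝ ∞ g) :
    Continuous (gone n j g) :=
  ((hg.fderiv_right (m := ∞) (le_refl _)).continuous).clm_comp continuous_const

lemma hasFDerivAt_comp_update {g : Rn n → G} (hg : ContDiff ℝ ∞ g) (x : Rn n) (t : ℝ) :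
    HasFDerivAt (fun y : Rn n => g (Function.update y j t))
      (gone n j g (Function.update x j t)) x := by
  have h1 : DifferentiableAt ℝ g (Function.update x j t) :=
    (hg.differentiable (by simp)) _
  exact h1.hasFDerivAt.comp x (hasFDerivAt_update' j t x)

lemma hasFDerivAt_prim {g : Rn n → G} (hg : ContDiff ℝ ∞ g) (x₀ : Rn n) :
    HasFDerivAt (prim n j g)
      (prim n j (gone n j g) x₀
        + (ContinuousLinearMap.proj j : Rn n →L[ℝ] ℝ).smulRight (g x₀)) x₀ := by
  have hgc : Continuous g := hg.continuous
  have hg1c : Continuous (gone n j g) := continuous_gone j hg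
  set c : ℝ := x₀ j with hc
  -- T1 : fixed upper limit
  set K : Set (Rn n) :=
    (fun p : Rn n × ℝ => Function.update p.1 j p.2) ''
      (Metric.closedBall x₀ 1 ×ˢ Set.uIcc 0 c) with hK
  have hKcomp : IsCompact K :=
    ((isCompact_closedBall x₀ 1).prod isCompact_uIcc).image (continuous_update_pair j)
  obtain ⟨C, hC⟩ := hKcomp.exists_bound_of_continuousOn (hg1c.continuousOn)
  have hT1 : HasFDerivAt (fun x : Rn n => ∫ t in (0:ℝ)..c, g (Function.update x j t))
      (∫ t in (0:ℝ)..c, gone n j g (Function.update x₀ j t)) x₀ := by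
    refine intervalIntegral.hasFDerivAt_integral_of_dominated_of_fderiv_le
      (𝕜 := ℝ) (μ := MeasureTheory.volume) (F := fun x t => g (Function.update x j t))
      (F' := fun x t => gone n j g (Function.update x j t)) (x₀ := x₀) (a := 0) (b := c)
      (bound := fun _ => C) (s := Metric.ball x₀ 1) (Metric.ball_mem_nhds x₀ one_pos) ?_ ?_ ?_ ?_ ?_ ?_
    · filter_upwards with x
      exact (continuous_comp_update_slice j hgc x).aestronglyMeasurable
    · exact (hgc.comp (continuous_update_slice j x₀)).intervalIntegrable _ _
    · exact (hg1c.comp (continuous_update_slice j x₀)).aestronglyMeasurable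
    · filter_upwards with t ht x hx
      refine hC _ ⟨(x, t), ⟨Metric.ball_subset_closedBall hx, ?_⟩, rfl⟩
      exact Set.Ioc_subset_Icc_self ht
    · exact intervalIntegrable_const
    · filter_upwards with t ht x hx
      exact hasFDerivAt_comp_update j hg x t
  -- T2 : moving upper limit
  have hT2 : HasFDerivAt (fun x : Rn n => ∫ t in c..(x j), g (Function.update x j t))
      ((ContinuousLinearMap.proj j : Rn n →L[ℝ] ℝ).smulRight (g x₀)) x₀ := by
    rw [hasFDerivAt_iff_isLittleO_nhds_zero]
    rw [Asymptotics.isLittleO_iff]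
    intro ε hε
    obtain ⟨δ, hδ, hδε⟩ := Metric.continuousAt_iff.mp (hgc.continuousAt (x := x₀)) ε hε
    filter_upwards [Metric.ball_mem_nhds (0 : Rn n) hδ] with v hv
    have hvd : dist (x₀ + v) x₀ < δ := by
      simpa [dist_eq_norm] using (mem_ball_zero_iff.mp hv)
    have hint : ∀ t ∈ Set.uIoc c ((x₀ + v) j),
        ‖g (Function.update (x₀ + v) j t) - g x₀‖ ≤ ε := by
      intro t ht
      have ht' : t ∈ Set.uIcc c ((x₀ + v) j) := Set.Ioc_subset_Icc_self ht
      have h1 : |t - c| ≤ |(x₀ + v) j - c| := by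
        rw [Set.uIcc, Set.mem_Icc] at ht'
        rw [abs_le]
        rw [← max_sub_min_eq_abs]
        constructor
        · linarith [ht'.1, le_max_left c ((x₀ + v) j)]
        · linarith [ht'.2, min_le_left c ((x₀ + v) j)]
      have hdist : dist (Function.update (x₀ + v) j t) x₀ < δ := by
        rw [dist_pi_lt_iff hδ]
        intro i
        by_cases h : i = j
        · subst h
          rw [Function.update_self]
          have h2 : dist ((x₀ + v) i) (x₀ i) ≤ dist (x₀ + v) x₀ := dist_le_pi_dist _ _ i
          rw [Real.dist_eq]
          calc |t - x₀ i| ≤ |(x₀ + v) i - x₀ i| := by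
                simpa [hc, Real.dist_eq] using h1
            _ ≤ dist (x₀ + v) x₀ := by rw [← Real.dist_eq]; exact h2
            _ < δ := hvd
        · rw [Function.update_of_ne h]
          exact lt_of_le_of_lt (dist_le_pi_dist _ _ i) hvd
      have := hδε hdist
      rw [dist_eq_norm] at this
      exact this.le
    have hIi : IntervalIntegrable (fun t => g (Function.update (x₀ + v) j t))
        MeasureTheory.volume c ((x₀ + v) j) :=
      (continuous_comp_update_slice j hgc _).intervalIntegrable _ _
    have key : (∫ t in c..((x₀ + v) j), g (Function.update (x₀ + v) j t))
        - ((x₀ + v) j - c) • g x₀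
        = ∫ t in c..((x₀ + v) j), (g (Function.update (x₀ + v) j t) - g x₀) := by
      rw [intervalIntegral.integral_sub hIi intervalIntegrable_const,
        intervalIntegral.integral_const]
    have hnorm : ‖(∫ t in c..((x₀ + v) j), (g (Function.update (x₀ + v) j t) - g x₀))‖
        ≤ ε * |(x₀ + v) j - c| :=
      intervalIntegral.norm_integral_le_of_norm_le_const hint
    have hvj : |(x₀ + v) j - c| ≤ ‖v‖ := by
      have : (x₀ + v) j - c = v j := by simp [hc]
      rw [this]
      exact (norm_le_pi_norm v j)
    rw [show (∫ (t : ℝ) in c..x₀ j, g (Function.update x₀ j t)) = 0 from intervalIntegral.integral_same, sub_zero]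
    have heval : ((ContinuousLinearMap.proj j : Rn n →L[ℝ] ℝ).smulRight (g x₀)) v
        = ((x₀ + v) j - c) • g x₀ := by
      simp [hc]
    rw [heval, key]
    calc ‖(∫ t in c..((x₀ + v) j), (g (Function.update (x₀ + v) j t) - g x₀))‖
        ≤ ε * |(x₀ + v) j - c| := hnorm
      _ ≤ ε * ‖v‖ := mul_le_mul_of_nonneg_left hvj hε.le
  -- combine
  have hsplit : prim n j g = fun x =>
      (∫ t in (0:ℝ)..c, g (Function.update x j t))
        + ∫ t in c..(x j), g (Function.update x j t) := by
    funext x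
    rw [prim]
    rw [intervalIntegral.integral_add_adjacent_intervals
      ((continuous_comp_update_slice j hgc x).intervalIntegrable _ _)
      ((continuous_comp_update_slice j hgc x).intervalIntegrable _ _)]
  rw [hsplit]
  have : prim n j (gone n j g) x₀ = ∫ t in (0:ℝ)..c, gone n j g (Function.update x₀ j t) := rfl
  rw [this]
  exact hT1.add hT2

lemma contDiff_prim (n : ℕ) (j : Fin n) :
    ∀ (k : ℕ) {G : Type} [NormedAddCommGroup G] [NormedSpace ℝ G] [CompleteSpace G]
      (g : Rn n → G), ContDiff ℝ ∞ g → ContDiff ℝ k (prim n j g) := by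
  intro k
  induction k with
  | zero =>
    intro G _ _ _ g hg
    rw [Nat.cast_zero, contDiff_zero]
    rw [continuous_iff_continuousAt]
    exact fun x => (hasFDerivAt_prim j hg x).continuousAt
  | succ k ih =>
    intro G _ _ _ g hg
    have hcast : ((k+1 : ℕ) : WithTop ℕ∞) = (k : WithTop ℕ∞) + 1 := by exact_mod_cast rfl
    rw [hcast, contDiff_succ_iff_fderiv]
    refine ⟨fun x => (hasFDerivAt_prim j hg x).differentiableAt, ?_, ?_⟩
    · intro h
      exact absurd h (by exact_mod_cast WithTop.natCast_ne_top k)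
    · have hfd : fderiv ℝ (prim n j g) = fun x =>
          prim n j (gone n j g) x
            + (ContinuousLinearMap.proj j : Rn n →L[ℝ] ℝ).smulRight (g x) :=
        funext fun x => (hasFDerivAt_prim j hg x).fderiv
      rw [hfd]
      have hg1 : ContDiff ℝ ∞ (gone n j g) :=
        (hg.fderiv_right (m := ∞) (le_refl _)).clm_comp contDiff_const
      refine (ih (gone n j g) hg1).add ?_
      have h2 : (fun x : Rn n =>
          (ContinuousLinearMap.proj j : Rn n →L[ℝ] ℝ).smulRight (g x))
          = fun x => (ContinuousLinearMap.smulRightL ℝ (Rn n) G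
              (ContinuousLinearMap.proj j)) (g x) := rfl
      rw [h2]
      exact (ContinuousLinearMap.smulRightL ℝ (Rn n) G
        (ContinuousLinearMap.proj j)).contDiff.comp (hg.of_le (by exact_mod_cast le_top))

end AuxPrim
/-- For every smooth `F`, the function `S̃_{j,λ}F` is smooth
and `(D_j - λ)(S̃_{j,λ}F) = F`; that is, `S̃_{j,λ}` is a linear right inverse
for `D_j - λ` on `C^∞(ℝⁿ,ℂ)`. -/
theorem stmt11 (n : ℕ) (j : Fin n) (lam : ℂ) :
    -- `S̃_{j,λ}` is linear (on smooth functions)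
    (∀ (c : ℂ) (F G : Rn n → ℂ), ContDiff ℝ ∞ F → ContDiff ℝ ∞ G →
      Stilde n j lam (fun x => c * F x + G x) =
        fun x => c * Stilde n j lam F x + Stilde n j lam G x) ∧
    -- and it is a right inverse for `D_j - λ`
    ∀ F : Rn n → ℂ, ContDiff ℝ ∞ F →
      ContDiff ℝ ∞ (Stilde n j lam F) ∧
      (fun x => pd n j (Stilde n j lam F) x - lam * Stilde n j lam F x) = F := by
  constructor
  · -- linearity
    intro c F G hF hG
    funext x
    have hex : Continuous fun t : ℝ => Complex.exp (lam * (((x j : ℝ) : ℂ) - ((t : ℝ) : ℂ))) := by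
      exact Complex.continuous_exp.comp (continuous_const.mul
        ((Complex.continuous_ofReal.comp continuous_const).sub
          (Complex.continuous_ofReal.comp continuous_id)))
    have hFu : Continuous fun t : ℝ => F (Function.update x j t) :=
      hF.continuous.comp (continuous_update_slice j x)
    have hGu : Continuous fun t : ℝ => G (Function.update x j t) :=
      hG.continuous.comp (continuous_update_slice j x)
    have h1 : IntervalIntegrable
        (fun t => c * (F (Function.update x j t) * Complex.exp (lam * (((x j : ℝ) : ℂ) - ((t : ℝ) : ℂ)))))
        MeasureTheory.volume 0 (x j) :=
      (continuous_const.mul (hFu.mul hex)).intervalIntegrable _ _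
    have h2 : IntervalIntegrable
        (fun t => G (Function.update x j t) * Complex.exp (lam * (((x j : ℝ) : ℂ) - ((t : ℝ) : ℂ))))
        MeasureTheory.volume 0 (x j) :=
      (hGu.mul hex).intervalIntegrable _ _
    simp only [Stilde]
    rw [← intervalIntegral.integral_const_mul, ← intervalIntegral.integral_add h1 h2]
    congr 1
    funext t
    ring
  · -- right inverse
    intro F hF
    set g : Rn n → ℂ := fun z => F z * Complex.exp (-(lam * ((z j : ℝ) : ℂ))) with hgdef
    set M : Rn n →L[ℝ] ℂ :=
      lam • (Complex.ofRealCLM.comp (ContinuousLinearMap.proj j : Rn n →L[ℝ] ℝ)) with hMdef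
    have hMx : ∀ y : Rn n, M y = lam * ((y j : ℝ) : ℂ) := by
      intro y
      simp [hMdef, smul_eq_mul]
    have hexpsm : ∀ μ : ℂ, ContDiff ℝ ∞ fun z : Rn n => Complex.exp (μ * ((z j : ℝ) : ℂ)) := by
      intro μ
      have hlin : ContDiff ℝ ∞ fun z : Rn n => μ * ((z j : ℝ) : ℂ) := by
        exact contDiff_const.mul (Complex.ofRealCLM.contDiff.comp
          (ContinuousLinearMap.proj j : Rn n →L[ℝ] ℝ).contDiff)
      exact (Complex.contDiff_exp (𝕜 := ℝ)).comp hlin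
    have hgsm : ContDiff ℝ ∞ g := by
      have h1 : ContDiff ℝ ∞ fun z : Rn n => Complex.exp (-lam * ((z j : ℝ) : ℂ)) := hexpsm (-lam)
      simp only [neg_mul] at h1
      exact hF.mul h1
    have hSeq : Stilde n j lam F
        = fun x => Complex.exp (lam * ((x j : ℝ) : ℂ)) * prim n j g x := by
      funext x
      simp only [Stilde, prim]
      rw [← intervalIntegral.integral_const_mul]
      congr 1
      funext t
      rw [hgdef]
      simp only [Function.update_self]
      have harg : lam * (((x j : ℝ) : ℂ) - ((t : ℝ) : ℂ))
          = lam * ((x j : ℝ) : ℂ) + -(lam * ((t : ℝ) : ℂ)) := by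
        ring
      rw [harg, Complex.exp_add]
      ring
    have hPsm : ContDiff ℝ ∞ (prim n j g) :=
      contDiff_infty.mpr (fun k => contDiff_prim n j k g hgsm)
    rw [hSeq]
    refine ⟨(hexpsm lam).mul hPsm, ?_⟩
    funext x
    -- derivative of the exponential factor
    have hAx : HasFDerivAt (fun y : Rn n => Complex.exp (lam * ((y j : ℝ) : ℂ)))
        (Complex.exp (lam * ((x j : ℝ) : ℂ)) • M) x := by
      have h := (M.hasFDerivAt (x := x)).cexp
      simp only [hMx] at h
      exact h
    have hPx := hasFDerivAt_prim j hgsm x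
    have hprod := hAx.mul hPx
    have hfd := (show HasFDerivAt (fun y : Rn n => Complex.exp (lam * ((y j : ℝ) : ℂ)) * prim n j g y) _ x from hprod).fderiv
    simp only [pd, hfd]
    -- evaluate the derivative at `Pi.single j 1`
    have hres : resetCLM n j (Pi.single j (1 : ℝ)) = 0 := by
      funext i
      rw [resetCLM_apply]
      by_cases h : i = j
      · simp [h]
      · simp [h, Pi.single_eq_of_ne h]
    have hZ : prim n j (gone n j g) x (Pi.single j (1 : ℝ)) = 0 := by
      have hint : IntervalIntegrable (fun t => gone n j g (Function.update x j t))
          MeasureTheory.volume 0 (x j) :=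
        (continuous_comp_update_slice j (continuous_gone j hgsm) x).intervalIntegrable _ _
      have : prim n j (gone n j g) x
          = ∫ t in (0:ℝ)..(x j), gone n j g (Function.update x j t) := rfl
      rw [this, ContinuousLinearMap.intervalIntegral_apply hint]
      have hzero : ∀ t : ℝ, gone n j g (Function.update x j t) (Pi.single j (1:ℝ)) = 0 := by
        intro t
        simp [gone, hres]
      simp only [hzero, intervalIntegral.integral_zero]
    simp only [ContinuousLinearMap.add_apply, ContinuousLinearMap.smul_apply,
      ContinuousLinearMap.smulRight_apply, ContinuousLinearMap.proj_apply, hZ,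
      Pi.single_eq_same, one_smul, zero_add, smul_eq_mul]
    rw [hMx]
    simp only [Pi.single_eq_same, Complex.ofReal_one, mul_one]
    have hkey : Complex.exp (lam * ((x j : ℝ) : ℂ)) * g x = F x := by
      rw [hgdef]
      rw [show Complex.exp (lam * ((x j : ℝ) : ℂ)) * (F x * Complex.exp (-(lam * ((x j : ℝ) : ℂ))))
          = F x * (Complex.exp (lam * ((x j : ℝ) : ℂ)) * Complex.exp (-(lam * ((x j : ℝ) : ℂ))))
        from by ring, ← Complex.exp_add, add_neg_cancel, Complex.exp_zero, mul_one]
    linear_combination hkey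
end
end

section
/- Let j ∈ {1,…,n}, λ ∈ ℂ, and let K ⊆ ℝ^n be a compact, e_j-normal set with the zero surface. Then S̃_{j,λ}(𝓘_K) ⊆ 𝓘_K; that is, if F ∈ C^∞(ℝ^n,ℂ) is flat on K, then S̃_{j,λ}F is flat on K. -/
/-
Common setup: the space `C^∞(ℝⁿ,ℂ)` of smooth complex-valued functions on `ℝⁿ`
with the Fréchet topology of uniform convergence of all partial derivatives on
compact sets, the ideal `𝓘_K` of functions flat on a compact set `K`, and the
space of Whitney functions `ℰ(K) = C^∞(ℝⁿ,ℂ)/𝓘_K` with the quotient topology.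
-/

noncomputable section
open scoped ContDiff

/-- `K` is `v`-normal with the zero surface: `φ ≤ 0 ≤ ψ` on `K_v`. -/
def VNormalZero (n : ℕ) (v : Rn n) (K : Set (Rn n)) : Prop :=
  ∃ (Kv : Set (Rn n)) (φ ψ : Rn n → ℝ),
    IsCompact Kv ∧ (∀ x ∈ Kv, ∑ i, x i * v i = 0) ∧ (∀ x ∈ Kv, φ x ≤ 0 ∧ 0 ≤ ψ x) ∧
    K = {y | ∃ x ∈ Kv, ∃ t ∈ Set.Icc (φ x) (ψ x), y = t • v + x}

open intervalIntegral MeasureTheory in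
theorem contDiff_parint {n : ℕ} (k : ℕ) :
    ∀ {W : Type} [NormedAddCommGroup W] [NormedSpace ℝ W] [CompleteSpace W]
      (Ψ : (Rn n × ℝ) → W), ContDiff ℝ ∞ Ψ →
      ContDiff ℝ k (fun x : Rn n => ∫ u in (0:ℝ)..1, Ψ (x, u)) := by
  induction k with
  | zero =>
    intro W _ _ _ Ψ hΨ
    rw [Nat.cast_zero, contDiff_zero]
    have hc : Continuous (Function.uncurry (fun (x : Rn n) (u : ℝ) => Ψ (x, u))) :=
      hΨ.continuous
    have h := continuous_parametric_primitive_of_continuous (μ := volume)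
      (f := fun (x : Rn n) (u : ℝ) => Ψ (x, u)) (a₀ := 0) hc
    have h2 := h.comp
      (show Continuous fun x : Rn n => (x, (1:ℝ)) from continuous_id.prodMk continuous_const)
    simpa [Function.comp_def] using h2
  | succ k ih =>
    intro W _ _ _ Ψ hΨ
    set Ψ' : (Rn n × ℝ) → (Rn n →L[ℝ] W) :=
      fun p => (fderiv ℝ Ψ p).comp (ContinuousLinearMap.inl ℝ (Rn n) ℝ) with hΨ'def
    have hΨ'smooth : ContDiff ℝ ∞ Ψ' :=
      (hΨ.fderiv_right (le_refl _)).clm_comp contDiff_const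
    have hdiff : ∀ (x : Rn n) (u : ℝ),
        HasFDerivAt (fun y => Ψ (y, u)) (Ψ' (x, u)) x := by
      intro x u
      have h1 := (hΨ.differentiable (by simp) (x, u)).hasFDerivAt
      have h2 : HasFDerivAt (fun y : Rn n => (y, u))
          (ContinuousLinearMap.inl ℝ (Rn n) ℝ) x := hasFDerivAt_prodMk_left x u
      exact h1.comp x h2
    have key : ∀ x₀ : Rn n, HasFDerivAt (fun x => ∫ u in (0:ℝ)..1, Ψ (x, u))
        (∫ u in (0:ℝ)..1, Ψ' (x₀, u)) x₀ := by
      intro x₀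
      haveI : SecondCountableTopologyEither ℝ (Rn n →L[ℝ] W) :=
        ⟨Or.inl inferInstance⟩
      have hcpt : IsCompact ((Metric.closedBall x₀ 1) ×ˢ (Set.uIcc (0:ℝ) 1)) :=
        (isCompact_closedBall x₀ 1).prod isCompact_uIcc
      obtain ⟨C, hC⟩ := hcpt.exists_bound_of_continuousOn hΨ'smooth.continuous.continuousOn
      exact intervalIntegral.hasFDerivAt_integral_of_dominated_of_fderiv_le
        (F := fun x u => Ψ (x, u)) (F' := fun x u => Ψ' (x, u)) (bound := fun _ => C)
        (Metric.ball_mem_nhds x₀ zero_lt_one)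
        (Filter.Eventually.of_forall fun x =>
          (hΨ.continuous.comp (continuous_const.prodMk continuous_id)).aestronglyMeasurable)
        ((hΨ.continuous.comp (continuous_const.prodMk continuous_id)).intervalIntegrable 0 1)
        (hΨ'smooth.continuous.comp (continuous_const.prodMk continuous_id)).aestronglyMeasurable
        (Filter.Eventually.of_forall fun t ht x hx =>
          hC (x, t) ⟨Metric.ball_subset_closedBall hx, Set.uIoc_subset_uIcc ht⟩)
        (intervalIntegrable_const)
        (Filter.Eventually.of_forall fun t _ x _ => hdiff x t)
    have hcast : ((k + 1 : ℕ) : WithTop ℕ∞) = (k : WithTop ℕ∞) + 1 := by exact_mod_cast rfl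
    rw [hcast, contDiff_succ_iff_fderiv]
    refine ⟨fun x => (key x).differentiableAt, ?_, ?_⟩
    · intro h; exact absurd h (by simp)
    · have heq : (fderiv ℝ (fun x => ∫ u in (0:ℝ)..1, Ψ (x, u)))
          = fun x₀ => ∫ u in (0:ℝ)..1, Ψ' (x₀, u) := funext fun x => (key x).fderiv
      rw [heq]
      exact ih Ψ' hΨ'smooth
section StildeSmooth
open intervalIntegral MeasureTheory

variable {n : ℕ} {j : Fin n} {lam : ℂ}

theorem contDiff_coord (i : Fin n) : ContDiff ℝ ∞ (fun x : Rn n => x i) :=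
  contDiff_apply ℝ ℝ i

/-- The substituted integrand. -/
def PsiS (n : ℕ) (j : Fin n) (lam : ℂ) (F : Rn n → ℂ) : Rn n × ℝ → ℂ :=
  fun p => F (Function.update p.1 j (p.1 j * p.2)) *
    Complex.exp (lam * ((p.1 j - p.1 j * p.2 : ℝ) : ℂ))

theorem contDiff_updateMap :
    ContDiff ℝ ∞ (fun p : Rn n × ℝ => Function.update p.1 j (p.1 j * p.2)) := by
  rw [contDiff_pi]
  intro i
  rcases eq_or_ne i j with h | h
  · subst h
    have h2 : (fun p : Rn n × ℝ => Function.update p.1 i (p.1 i * p.2) i)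
        = fun p : Rn n × ℝ => p.1 i * p.2 := by
      funext p; simp
    rw [h2]
    exact ((contDiff_coord i).comp contDiff_fst).mul contDiff_snd
  · have h2 : (fun p : Rn n × ℝ => Function.update p.1 j (p.1 j * p.2) i)
        = fun p : Rn n × ℝ => p.1 i := by
      funext p; simp [Function.update_of_ne h]
    rw [h2]
    exact (contDiff_coord i).comp contDiff_fst

theorem contDiff_psiS {F : Rn n → ℂ} (hF : ContDiff ℝ ∞ F) :
    ContDiff ℝ ∞ (PsiS n j lam F) := by
  apply ContDiff.mul
  · exact hF.comp contDiff_updateMap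
  · apply (Complex.contDiff_exp (𝕜 := ℝ)).comp
    apply ContDiff.mul contDiff_const
    apply Complex.ofRealCLM.contDiff.comp
    exact (((contDiff_coord j).comp contDiff_fst)).sub
      ((((contDiff_coord j).comp contDiff_fst)).mul contDiff_snd)

theorem stilde_repr (F : Rn n → ℂ) :
    Stilde n j lam F = fun x => (x j) • ∫ u in (0:ℝ)..1, PsiS n j lam F (x, u) := by
  funext x
  have heq := intervalIntegral.smul_integral_comp_mul_left
    (f := fun t => F (Function.update x j t) * Complex.exp (lam * ((x j : ℂ) - (t : ℂ))))
    (c := x j) (a := 0) (b := 1)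
  rw [mul_zero, mul_one] at heq
  rw [Stilde, ← heq]
  congr 1
  apply intervalIntegral.integral_congr
  intro u _
  simp only [PsiS]
  push_cast
  ring_nf

theorem contDiff_stilde {F : Rn n → ℂ} (hF : ContDiff ℝ ∞ F) :
    ContDiff ℝ ∞ (Stilde n j lam F) := by
  rw [stilde_repr]
  exact ContDiff.smul (contDiff_coord j)
    (contDiff_infty.2 fun k => contDiff_parint k _ (contDiff_psiS hF))

end StildeSmooth
section PdFormulas
open intervalIntegral MeasureTheory Metric

variable {n : ℕ} {j : Fin n} {lam : ℂ}

theorem hasDerivAt_updateLine (x : Rn n) (j : Fin n) (s : ℝ) :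
    HasDerivAt (fun s : ℝ => Function.update x j s) (Pi.single j (1:ℝ)) s := by
  have h : (fun s : ℝ => Function.update x j s)
      = fun s : ℝ => Function.update x j 0 + s • (Pi.single j (1:ℝ) : Rn n) := by
    funext s
    funext i
    rcases eq_or_ne i j with h | h
    · subst h; simp
    · simp [Function.update_of_ne h, Pi.single_eq_of_ne h]
  rw [h]
  simpa using ((hasDerivAt_id s).smul_const (Pi.single j (1:ℝ) : Rn n)).const_add
    (Function.update x j 0)

theorem hasDerivAt_addLine (x v : Rn n) (s : ℝ) :
    HasDerivAt (fun s : ℝ => x + s • v) v s := by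
  simpa using ((hasDerivAt_id s).smul_const v).const_add x

/-- `pd` as a derivative along the `j`-th coordinate line. -/
theorem pd_eq_of_hasDerivAt {G : Rn n → ℂ} {x : Rn n} (hG : DifferentiableAt ℝ G x)
    {d : ℂ} (h : HasDerivAt (fun s => G (Function.update x j s)) d (x j)) :
    pd n j G x = d := by
  have hx : Function.update x j (x j) = x := Function.update_eq_self j x
  have hG' : HasFDerivAt G (fderiv ℝ G x) (Function.update x j (x j)) := by
    rw [hx]; exact hG.hasFDerivAt
  have hcomp := hG'.comp_hasDerivAt (x j) (hasDerivAt_updateLine x j (x j))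
  have hcomp' : HasDerivAt (fun s => G (Function.update x j s)) (fderiv ℝ G x (Pi.single j 1)) (x j) := by
    simpa [Function.comp_def] using hcomp
  exact HasDerivAt.unique hcomp' h

theorem pd_eq_of_hasDerivAt_line {G : Rn n → ℂ} {x : Rn n} {i : Fin n}
    (hG : DifferentiableAt ℝ G x)
    {d : ℂ} (h : HasDerivAt (fun s : ℝ => G (x + s • (Pi.single i (1:ℝ) : Rn n))) d (0:ℝ)) :
    pd n i G x = d := by
  have hx : x + (0:ℝ) • (Pi.single i (1:ℝ) : Rn n) = x := by simp
  have hG' : HasFDerivAt G (fderiv ℝ G x) (x + (0:ℝ) • (Pi.single i (1:ℝ) : Rn n)) := by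
    rw [hx]; exact hG.hasFDerivAt
  have hcomp := hG'.comp_hasDerivAt (0:ℝ) (hasDerivAt_addLine x (Pi.single i (1:ℝ) : Rn n) 0)
  have hcomp' : HasDerivAt (fun s => G (x + s • (Pi.single i (1:ℝ) : Rn n)))
      (fderiv ℝ G x (Pi.single i 1)) (0:ℝ) := by
    simpa [Function.comp_def] using hcomp
  exact HasDerivAt.unique hcomp' h

theorem hasDerivAt_cexp_real (c : ℂ) (s : ℝ) :
    HasDerivAt (fun t : ℝ => Complex.exp (c * t)) (c * Complex.exp (c * s)) s := by
  have h1 : HasDerivAt (fun z : ℂ => Complex.exp (c * z)) (c * Complex.exp (c * s)) (s : ℂ) := by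
    simpa [mul_comm, Function.comp_def] using
      (Complex.hasDerivAt_exp (c * (s:ℂ))).comp (s : ℂ) ((hasDerivAt_id (s : ℂ)).const_mul c)
  exact h1.comp_ofReal

end PdFormulas
section PdStilde
open intervalIntegral MeasureTheory Metric

variable {n : ℕ} {j : Fin n} {lam : ℂ}

theorem continuous_updateLine (x : Rn n) (j : Fin n) :
    Continuous (fun t : ℝ => Function.update x j t) := by
  apply continuous_pi
  intro i
  rcases eq_or_ne i j with h | h
  · subst h; simpa using continuous_id'
  · simp only [Function.update_of_ne h]; exact continuous_const

theorem pd_stilde_j {F : Rn n → ℂ} (hF : ContDiff ℝ ∞ F) :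
    pd n j (Stilde n j lam F) = fun x => F x + lam * Stilde n j lam F x := by
  funext x
  have hq : Continuous (fun t : ℝ => F (Function.update x j t) * Complex.exp (-(lam * t))) := by
    apply Continuous.mul
    · exact hF.continuous.comp (continuous_updateLine x j)
    · exact Complex.continuous_exp.comp
        ((continuous_const.mul Complex.continuous_ofReal).neg)
  have hh : HasDerivAt (fun r : ℝ => ∫ t in (0:ℝ)..r,
      F (Function.update x j t) * Complex.exp (-(lam * t)))
      (F (Function.update x j (x j)) * Complex.exp (-(lam * (x j)))) (x j) :=
    intervalIntegral.integral_hasDerivAt_right (hq.intervalIntegrable 0 (x j))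
      (hq.stronglyMeasurableAtFilter volume (nhds (x j))) hq.continuousAt
  have key : ∀ s : ℝ, Stilde n j lam F (Function.update x j s)
      = Complex.exp (lam * s) * ∫ t in (0:ℝ)..s,
        F (Function.update x j t) * Complex.exp (-(lam * t)) := by
    intro s
    rw [Stilde]
    simp only [Function.update_self, Function.update_idem]
    rw [← intervalIntegral.integral_const_mul]
    apply intervalIntegral.integral_congr
    intro t _
    show F (Function.update x j t) * Complex.exp (lam * ((s:ℂ) - (t:ℂ)))
      = Complex.exp (lam * (s:ℂ)) * (F (Function.update x j t) * Complex.exp (-(lam * (t:ℂ))))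
    have hexp : Complex.exp (lam * ((s:ℂ) - (t:ℂ)))
        = Complex.exp (lam * (s:ℂ)) * Complex.exp (-(lam * (t:ℂ))) := by
      rw [← Complex.exp_add]; ring_nf
    rw [hexp]; ring
  have hfun : (fun s : ℝ => Stilde n j lam F (Function.update x j s))
      = fun s : ℝ => Complex.exp (lam * s) * ∫ t in (0:ℝ)..s,
        F (Function.update x j t) * Complex.exp (-(lam * t)) := funext key
  have hmain : HasDerivAt (fun s : ℝ => Complex.exp (lam * s) * ∫ t in (0:ℝ)..s,
        F (Function.update x j t) * Complex.exp (-(lam * t))) _ (x j) :=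
    (hasDerivAt_cexp_real lam (x j)).mul hh
  rw [← hfun] at hmain
  have hone : Complex.exp (lam * (x j : ℂ)) * Complex.exp (-(lam * (x j : ℂ))) = 1 := by
    rw [← Complex.exp_add]; simp
  have hval : lam * Complex.exp (lam * (x j : ℂ)) * (∫ t in (0:ℝ)..(x j),
        F (Function.update x j t) * Complex.exp (-(lam * t)))
      + Complex.exp (lam * (x j : ℂ))
        * (F (Function.update x j (x j)) * Complex.exp (-(lam * (x j : ℂ))))
      = F x + lam * Stilde n j lam F x := by
    have hs : Stilde n j lam F x = Complex.exp (lam * (x j : ℂ)) * ∫ t in (0:ℝ)..(x j),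
        F (Function.update x j t) * Complex.exp (-(lam * t)) := by
      have := key (x j)
      rwa [Function.update_eq_self] at this
    rw [hs, Function.update_eq_self]
    linear_combination (F x) * hone
  rw [hval] at hmain
  exact pd_eq_of_hasDerivAt
    ((contDiff_stilde hF).differentiable (by simp) |>.differentiableAt) hmain

theorem pd_stilde_ne {F : Rn n → ℂ} {i : Fin n} (hij : i ≠ j) (hF : ContDiff ℝ ∞ F) :
    pd n i (Stilde n j lam F) = Stilde n j lam (pd n i F) := by
  funext x₀
  set e : Rn n := Pi.single i (1:ℝ) with he
  have hej : e j = 0 := Pi.single_eq_of_ne (Ne.symm hij) 1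
  have hupd : ∀ (s t : ℝ), Function.update (x₀ + s • e) j t
      = Function.update x₀ j t + s • e := by
    intro s t
    funext m
    rcases eq_or_ne m j with h | h
    · subst h; simp [hej]
    · simp [Function.update_of_ne h]
  have hyj : ∀ s : ℝ, (x₀ + s • e) j = x₀ j := by intro s; simp [hej]
  have hrepr : ∀ s : ℝ, Stilde n j lam F (x₀ + s • e)
      = ∫ t in (0:ℝ)..(x₀ j),
          F (Function.update x₀ j t + s • e) * Complex.exp (lam * ((x₀ j : ℂ) - (t:ℂ))) := by
    intro s
    rw [Stilde]
    simp only [hyj s, hupd s]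
  -- continuity facts
  have hmap : Continuous (fun p : ℝ × ℝ => Function.update x₀ j p.2 + p.1 • e) :=
    ((continuous_updateLine x₀ j).comp continuous_snd).add (continuous_fst.smul continuous_const)
  have hFc : Continuous F := hF.continuous
  have hpdc : Continuous (pd n i F) := (contDiff_pd i hF).continuous
  have hexpc : Continuous (fun t : ℝ => Complex.exp (lam * ((x₀ j : ℂ) - (t:ℂ)))) :=
    Complex.continuous_exp.comp (continuous_const.mul
      (continuous_const.sub Complex.continuous_ofReal))
  -- the full primed integrand, continuous in (s,t)
  have hF'c : Continuous (fun p : ℝ × ℝ =>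
      pd n i F (Function.update x₀ j p.2 + p.1 • e)
        * Complex.exp (lam * ((x₀ j : ℂ) - (p.2:ℂ)))) :=
    (hpdc.comp hmap).mul (hexpc.comp continuous_snd)
  have hcpt : IsCompact ((closedBall (0:ℝ) 1) ×ˢ (Set.uIcc (0:ℝ) (x₀ j))) :=
    (isCompact_closedBall 0 1).prod isCompact_uIcc
  obtain ⟨C, hC⟩ := hcpt.exists_bound_of_continuousOn hF'c.continuousOn
  have hder := (intervalIntegral.hasDerivAt_integral_of_dominated_loc_of_deriv_le
    (F := fun (s t : ℝ) => F (Function.update x₀ j t + s • e)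
        * Complex.exp (lam * ((x₀ j : ℂ) - (t:ℂ))))
    (F' := fun (s t : ℝ) => pd n i F (Function.update x₀ j t + s • e)
        * Complex.exp (lam * ((x₀ j : ℂ) - (t:ℂ))))
    (x₀ := (0:ℝ)) (a := 0) (b := x₀ j) (bound := fun _ => C) (μ := volume)
    (ball_mem_nhds (0:ℝ) zero_lt_one)
    (Filter.Eventually.of_forall fun s => Continuous.aestronglyMeasurable
      (((hFc.comp (hmap.comp (continuous_const.prodMk continuous_id))).mul hexpc)))
    (((hFc.comp (hmap.comp (continuous_const.prodMk continuous_id))).mul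
        hexpc).intervalIntegrable 0 (x₀ j))
    (Continuous.aestronglyMeasurable
      ((hpdc.comp (hmap.comp (continuous_const.prodMk continuous_id))).mul hexpc))
    (Filter.Eventually.of_forall fun t ht s hs =>
      hC (s, t) ⟨ball_subset_closedBall hs, Set.uIoc_subset_uIcc ht⟩)
    intervalIntegrable_const
    (Filter.Eventually.of_forall fun t _ s _ => by
      have hline : HasDerivAt (fun s : ℝ => Function.update x₀ j t + s • e) e s :=
        hasDerivAt_addLine _ _ _
      have hdF := ((hF.differentiable (by simp)) _).hasFDerivAt.comp_hasDerivAt s hline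
      have hdF' : HasDerivAt (fun s : ℝ => F (Function.update x₀ j t + s • e))
          (pd n i F (Function.update x₀ j t + s • e)) s := by
        simpa [Function.comp_def, pd, he] using hdF
      exact hdF'.mul_const _)).2
  -- identify the function and the derivative
  have hfun : (fun s : ℝ => ∫ t in (0:ℝ)..(x₀ j),
      F (Function.update x₀ j t + s • e) * Complex.exp (lam * ((x₀ j : ℂ) - (t:ℂ))))
      = fun s : ℝ => Stilde n j lam F (x₀ + s • e) := by
    funext s; rw [hrepr s]
  rw [hfun] at hder
  have hint : (∫ t in (0:ℝ)..(x₀ j),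
      pd n i F (Function.update x₀ j t + (0:ℝ) • e)
        * Complex.exp (lam * ((x₀ j : ℂ) - (t:ℂ))))
      = Stilde n j lam (pd n i F) x₀ := by
    rw [Stilde]
    apply intervalIntegral.integral_congr
    intro t _
    simp
  rw [hint] at hder
  exact pd_eq_of_hasDerivAt_line
    ((contDiff_stilde hF).differentiable (by simp) |>.differentiableAt) hder

end PdStilde
section Flatness

variable {n : ℕ}

/-- Iterated partial derivatives along a list of directions (innermost first). -/
def pdSeq (n : ℕ) : List (Fin n) → (Rn n → ℂ) → (Rn n → ℂ)
  | [], g => g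
  | i :: L, g => pdSeq n L (pd n i g)

theorem contDiff_pdSeq : ∀ (L : List (Fin n)) {g : Rn n → ℂ},
    ContDiff ℝ ∞ g → ContDiff ℝ ∞ (pdSeq n L g)
  | [], _, hg => hg
  | _ :: L, _, hg => contDiff_pdSeq L (contDiff_pd _ hg)

theorem iteratedFDeriv_fderiv_eq_zero {g : Rn n → ℂ} {x : Rn n} {k : ℕ}
    (h : iteratedFDeriv ℝ (k + 1) g x = 0) :
    iteratedFDeriv ℝ k (fderiv ℝ g) x = 0 := by
  ext m v
  have h2 := iteratedFDeriv_succ_apply_right (𝕜 := ℝ) (f := g) (x := x) (n := k) (Fin.snoc m v)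
  rw [h] at h2
  simp only [Fin.init_snoc, Fin.snoc_last, ContinuousMultilinearMap.zero_apply] at h2
  simpa using h2.symm

theorem pd_eq_comp (i : Fin n) (g : Rn n → ℂ) :
    pd n i g = (⇑(ContinuousLinearMap.apply ℝ ℂ (Pi.single i (1:ℝ) : Rn n))) ∘ (fderiv ℝ g) :=
  rfl

theorem flat_pd {g : Rn n → ℂ} (hg : ContDiff ℝ ∞ g) {K : Set (Rn n)}
    (hflat : FlatOn n g K) (i : Fin n) : FlatOn n (pd n i g) K := by
  intro k x hx
  have h1 : iteratedFDeriv ℝ k (fderiv ℝ g) x = 0 :=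
    iteratedFDeriv_fderiv_eq_zero (hflat (k + 1) x hx)
  rw [pd_eq_comp i g, ContinuousLinearMap.iteratedFDeriv_comp_left _
    (hg.fderiv_right (m := ∞) (le_refl _)).contDiffAt (x := x) (by exact_mod_cast le_top), h1]
  ext m
  simp

theorem good_of_flat {K : Set (Rn n)} : ∀ (L : List (Fin n)) {g : Rn n → ℂ},
    ContDiff ℝ ∞ g → FlatOn n g K → ∀ x ∈ K, pdSeq n L g x = 0
  | [], g, _, hflat, x, hx => by
    have h := hflat 0 x hx
    have h2 := congrArg (fun T => T (fun _ : Fin 0 => (0 : Rn n))) h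
    simpa [iteratedFDeriv_zero_apply, pdSeq] using h2
  | i :: L, g, hg, hflat, x, hx =>
    good_of_flat L (contDiff_pd i hg) (flat_pd hg hflat i) x hx

theorem flat_of_good {K : Set (Rn n)} (k : ℕ) : ∀ {g : Rn n → ℂ}, ContDiff ℝ ∞ g →
    (∀ L, ∀ x ∈ K, pdSeq n L g x = 0) → ∀ x ∈ K, iteratedFDeriv ℝ k g x = 0 := by
  induction k with
  | zero =>
    intro g _ hgood x hx
    ext m
    simpa [iteratedFDeriv_zero_apply, pdSeq] using hgood [] x hx
  | succ k ih =>
    intro g hg hgood x hx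
    ext m
    rw [iteratedFDeriv_succ_apply_right]
    have hTi : ∀ i : Fin n,
        (iteratedFDeriv ℝ k (fderiv ℝ g) x (Fin.init m)) (Pi.single i (1:ℝ)) = 0 := by
      intro i
      have h0 : iteratedFDeriv ℝ k (pd n i g) x = 0 :=
        ih (contDiff_pd i hg) (fun L y hy => hgood (i :: L) y hy) x hx
      have hcl := ContinuousLinearMap.iteratedFDeriv_comp_left
        (ContinuousLinearMap.apply ℝ ℂ (Pi.single i (1:ℝ) : Rn n))
        (hg.fderiv_right (m := ∞) (le_refl _)).contDiffAt (x := x) (i := k) (by exact_mod_cast le_top)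
      rw [← pd_eq_comp i g, h0] at hcl
      have := congrArg (fun T => T (Fin.init m)) hcl.symm
      simpa using this
    have hv : m (Fin.last k) = ∑ i, (m (Fin.last k) i) • (Pi.single i (1:ℝ) : Rn n) := by
      funext i'
      rw [Finset.sum_apply]
      simp [Pi.single_apply]
    rw [hv, map_sum]
    simp [hTi]

end Flatness
section Geometry

variable {n : ℕ} {j : Fin n} {lam : ℂ} {K : Set (Rn n)}

theorem mem_K_update (hKn : VNormalZero n (Pi.single j 1) K) {x : Rn n} (hx : x ∈ K)
    {t : ℝ} (ht : t ∈ Set.uIcc 0 (x j)) : Function.update x j t ∈ K := by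
  obtain ⟨Kv, φ, ψ, _, hzero, hsign, hKeq⟩ := hKn
  rw [hKeq] at hx ⊢
  obtain ⟨x0, hx0, t₀, ht₀, hxeq⟩ := hx
  have hx0j : x0 j = 0 := by
    have h := hzero x0 hx0
    simpa [Pi.single_apply] using h
  have hxj : x j = t₀ := by
    rw [hxeq]; simp [hx0j]
  rw [hxj] at ht
  refine ⟨x0, hx0, t, ?_, ?_⟩
  · rcases Set.mem_uIcc.1 ht with ⟨h1, h2⟩ | ⟨h1, h2⟩
    · exact ⟨le_trans (hsign x0 hx0).1 h1, le_trans h2 ht₀.2⟩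
    · exact ⟨le_trans ht₀.1 h1, le_trans h2 (hsign x0 hx0).2⟩
  · funext m
    rcases eq_or_ne m j with h | h
    · subst h
      simp [hx0j]
    · have hxm : x m = t₀ * (Pi.single j (1:ℝ) : Rn n) m + x0 m := by rw [hxeq]; simp
      rw [(Pi.single_eq_of_ne h 1 : (Pi.single j (1:ℝ) : Rn n) m = 0)] at hxm
      simp only [Function.update_of_ne h, Pi.add_apply, Pi.smul_apply, smul_eq_mul]
      rw [hxm]
      rw [(Pi.single_eq_of_ne h 1 : (Pi.single j (1:ℝ) : Rn n) m = 0)]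
      ring

theorem stilde_vanish (hKn : VNormalZero n (Pi.single j 1) K) {H : Rn n → ℂ}
    (hH : ∀ y ∈ K, H y = 0) {x : Rn n} (hx : x ∈ K) : Stilde n j lam H x = 0 := by
  rw [Stilde]
  have h0 : Set.EqOn (fun t : ℝ => H (Function.update x j t)
      * Complex.exp (lam * ((x j : ℂ) - (t : ℂ)))) (fun _ => (0:ℂ)) (Set.uIcc 0 (x j)) := by
    intro t ht
    show H (Function.update x j t) * _ = 0
    rw [hH _ (mem_K_update hKn hx ht), zero_mul]
  rw [intervalIntegral.integral_congr h0, intervalIntegral.integral_zero]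

end Geometry

section Linearity

variable {n : ℕ}

theorem pd_add_mul (i : Fin n) {f g : Rn n → ℂ} (hf : Differentiable ℝ f)
    (hg : Differentiable ℝ g) (c : ℂ) :
    pd n i (fun x => f x + c * g x) = fun x => pd n i f x + c * pd n i g x := by
  funext x
  have h1 : DifferentiableAt ℝ (fun y => c * g y) x := (hg x).const_mul c
  show fderiv ℝ (fun y => f y + c * g y) x (Pi.single i 1) = _
  rw [show (fun y => f y + c * g y) = f + fun y => c * g y from rfl, fderiv_add (hf x) h1, fderiv_const_mul (hg x) c]
  simp [pd]

theorem pdSeq_add_mul : ∀ (L : List (Fin n)) {f g : Rn n → ℂ},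
    ContDiff ℝ ∞ f → ContDiff ℝ ∞ g → ∀ c : ℂ,
    pdSeq n L (fun x => f x + c * g x) = fun x => pdSeq n L f x + c * pdSeq n L g x
  | [], f, g, _, _, c => rfl
  | i :: L, f, g, hf, hg, c => by
    show pdSeq n L (pd n i (fun x => f x + c * g x)) = _
    rw [pd_add_mul i (hf.differentiable (by simp)) (hg.differentiable (by simp)) c]
    exact pdSeq_add_mul L (contDiff_pd i hf) (contDiff_pd i hg) c

end Linearity

section Main

variable {n : ℕ} {j : Fin n} {lam : ℂ} {K : Set (Rn n)}

theorem good_stilde (hKn : VNormalZero n (Pi.single j 1) K) (L : List (Fin n)) :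
    ∀ {g : Rn n → ℂ}, ContDiff ℝ ∞ g → (∀ M, ∀ x ∈ K, pdSeq n M g x = 0) →
    ∀ x ∈ K, pdSeq n L (Stilde n j lam g) x = 0 := by
  induction L with
  | nil =>
    intro g _ hgood x hx
    exact stilde_vanish hKn (fun y hy => hgood [] y hy) hx
  | cons i L ih =>
    intro g hg hgood x hx
    rcases eq_or_ne i j with h | h
    · subst h
      show pdSeq n L (pd n i (Stilde n i lam g)) x = 0
      rw [pd_stilde_j hg]
      rw [pdSeq_add_mul L hg (contDiff_stilde hg) lam]
      have h1 := hgood L x hx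
      have h2 := ih hg hgood x hx
      simp [h1, h2]
    · show pdSeq n L (pd n i (Stilde n j lam g)) x = 0
      rw [pd_stilde_ne h hg]
      exact ih (contDiff_pd i hg) (fun M y hy => hgood (i :: M) y hy) x hx

end Main

/-- If `K` is a compact, `e_j`-normal set with the zero
surface, then `S̃_{j,λ}(𝓘_K) ⊆ 𝓘_K`: if the smooth function `F` is flat on `K`
then `S̃_{j,λ}F` is flat on `K`. -/
theorem stmt12 (n : ℕ) (j : Fin n) (lam : ℂ) (K : Set (Rn n)) (hK : IsCompact K)
    (hKn : VNormalZero n (Pi.single j 1) K)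
    (F : Rn n → ℂ) (hF : ContDiff ℝ ∞ F) (hflat : FlatOn n F K) :
    FlatOn n (Stilde n j lam F) K := by
  
  have hgoodF : ∀ M, ∀ x ∈ K, pdSeq n M F x = 0 := fun M => good_of_flat M hF hflat
  have hgoodS : ∀ L, ∀ x ∈ K, pdSeq n L (Stilde n j lam F) x = 0 :=
    fun L => good_stilde hKn L hF hgoodF
  exact fun k x hx => flat_of_good k (contDiff_stilde hF) hgoodS x hx
end
end

section
/- Let j ∈ {1,…,n} and let K ⊆ ℝ^n be a compact, e_j-normal set with a smooth surface. Then there exist a compact, e_j-normal set K_0 ⊆ ℝ^n with the zero surface and a smooth bijection Φ = (Φ_1,…,Φ_n) : ℝ^n → ℝ^n with smooth inverse Φ^{-1} = (Φ_1^{-1},…,Φ_n^{-1}) such that ∂_j Φ_l^{-1} ≡ 1 if l = j, ∂_j Φ_l^{-1} ≡ 0 if l ≠ j, and Φ(K_0) = K. -/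
/-
Common setup: the space `C^∞(ℝⁿ,ℂ)` of smooth complex-valued functions on `ℝⁿ`
with the Fréchet topology of uniform convergence of all partial derivatives on
compact sets, the ideal `𝓘_K` of functions flat on a compact set `K`, and the
space of Whitney functions `ℰ(K) = C^∞(ℝⁿ,ℂ)/𝓘_K` with the quotient topology.
-/

noncomputable section
open scoped ContDiff

/-- `K` is `v`-normal: for a compact `K_v` contained in the hyperplane `H_v`
orthogonal to `v` and functions `φ ≤ ψ` on `K_v`,
`K = {t•v + x : x ∈ K_v, t ∈ [φ x, ψ x]}`. -/
def VNormal (n : ℕ) (v : Rn n) (K : Set (Rn n)) : Prop :=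
  ∃ (Kv : Set (Rn n)) (φ ψ : Rn n → ℝ),
    IsCompact Kv ∧ (∀ x ∈ Kv, ∑ i, x i * v i = 0) ∧ (∀ x ∈ Kv, φ x ≤ ψ x) ∧
    K = {y | ∃ x ∈ Kv, ∃ t ∈ Set.Icc (φ x) (ψ x), y = t • v + x}

/-- `K` is `v`-normal with a smooth surface: in addition there is a smooth
`Γ : ℝⁿ → ℝ` with `φ ≤ Γ ≤ ψ` on `K_v`. -/
def VNormalSmooth (n : ℕ) (v : Rn n) (K : Set (Rn n)) : Prop :=
  ∃ (Kv : Set (Rn n)) (φ ψ : Rn n → ℝ) (Γ : Rn n → ℝ),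
    IsCompact Kv ∧ (∀ x ∈ Kv, ∑ i, x i * v i = 0) ∧ (∀ x ∈ Kv, φ x ≤ ψ x) ∧
    ContDiff ℝ ∞ Γ ∧ (∀ x ∈ Kv, φ x ≤ Γ x ∧ Γ x ≤ ψ x) ∧
    K = {y | ∃ x ∈ Kv, ∃ t ∈ Set.Icc (φ x) (ψ x), y = t • v + x}

/-- If `K ⊆ ℝⁿ` is a compact, `e_j`-normal set with a smooth
surface, then there are a compact, `e_j`-normal set `K₀ ⊆ ℝⁿ` with the zero
surface and a smooth bijection `Φ : ℝⁿ → ℝⁿ` with smooth inverse `Θ = Φ⁻¹`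
satisfying `∂_j Θ_l ≡ 1` for `l = j` and `∂_j Θ_l ≡ 0` for `l ≠ j` (i.e. the
derivative of `Θ` in direction `e_j` is constantly `e_j`), such that
`Φ(K₀) = K`. -/
theorem stmt15 (n : ℕ) (j : Fin n) (K : Set (Rn n)) (hK : IsCompact K)
    (hKn : VNormalSmooth n (Pi.single j 1) K) :
    ∃ (K₀ : Set (Rn n)) (Φ Θ : Rn n → Rn n),
      IsCompact K₀ ∧ VNormalZero n (Pi.single j 1) K₀ ∧
      ContDiff ℝ ∞ Φ ∧ ContDiff ℝ ∞ Θ ∧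
      Function.LeftInverse Θ Φ ∧ Function.RightInverse Θ Φ ∧
      (∀ x : Rn n, fderiv ℝ Θ x (Pi.single j 1) = Pi.single j 1) ∧
      Φ '' K₀ = K := by
  obtain ⟨Kv, φ, ψ, Γ, hKvc, hKvj, hφψ, hΓ, hΓbd, hKeq⟩ := hKn
  -- projection killing the j-th coordinate
  set πL : (Rn n) →L[ℝ] Rn n :=
    ContinuousLinearMap.id ℝ (Rn n) -
      (ContinuousLinearMap.proj j).smulRight (Pi.single j 1) with hπL
  have hπapp : ∀ x : Rn n, πL x = x - x j • (Pi.single j 1 : Rn n) := fun x => rfl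
  have hπe : πL (Pi.single j 1) = 0 := by
    simp [hπapp, Pi.single_apply]
  have hπfix : ∀ x : Rn n, x j = 0 → πL x = x := by
    intro x hx; simp [hπapp, hx]
  have hxj0 : ∀ x ∈ Kv, x j = 0 := by
    intro x hx
    have := hKvj x hx
    rwa [Finset.sum_eq_single j (fun i _ hi => by simp [Pi.single_apply, hi])
      (by simp), Pi.single_apply, if_pos rfl, mul_one] at this
  set c : Rn n := Pi.single j 1 with hc
  set Φ : Rn n → Rn n := fun x => x + Γ (πL x) • c with hΦ
  set Θ : Rn n → Rn n := fun x => x - Γ (πL x) • c with hΘ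
  have hπΦ : ∀ x, πL (Φ x) = πL x := by
    intro x
    simp only [hΦ, map_add, map_smul, hπe, smul_zero, add_zero]
  have hπΘ : ∀ x, πL (Θ x) = πL x := by
    intro x
    simp only [hΘ, map_sub, map_smul, hπe, smul_zero, sub_zero]
  have hLI : Function.LeftInverse Θ Φ := by
    intro x; rw [show Θ (Φ x) = Φ x - Γ (πL (Φ x)) • c from rfl, hπΦ]; simp only [hΘ, hπΦ, hΦ]; abel
  have hRI : Function.RightInverse Θ Φ := by
    intro x; rw [show Φ (Θ x) = Θ x + Γ (πL (Θ x)) • c from rfl, hπΘ]; simp only [hΦ, hπΘ, hΘ]; abel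
  have hΓπ : ContDiff ℝ ∞ fun x : Rn n => Γ (πL x) := hΓ.comp πL.contDiff
  have hΦs : ContDiff ℝ ∞ Φ := contDiff_id.add (hΓπ.smul contDiff_const)
  have hΘs : ContDiff ℝ ∞ Θ := contDiff_id.sub (hΓπ.smul contDiff_const)
  -- K₀ = Θ '' K
  have hΘim : ∀ (x : Rn n), x ∈ Kv → ∀ t : ℝ, Θ (t • c + x) = (t - Γ x) • c + x := by
    intro x hx t
    have h1 : πL (t • c + x) = x := by
      rw [map_add, map_smul, hπe, smul_zero, zero_add, hπfix x (hxj0 x hx)]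
    simp only [hΘ, h1]
    rw [sub_smul]; abel
  refine ⟨Θ '' K, Φ, Θ, hK.image hΘs.continuous, ?_, hΦs, hΘs, hLI, hRI, ?_, ?_⟩
  · refine ⟨Kv, fun x => φ x - Γ x, fun x => ψ x - Γ x, hKvc, hKvj, ?_, ?_⟩
    · intro x hx
      exact ⟨sub_nonpos.2 (hΓbd x hx).1, sub_nonneg.2 (hΓbd x hx).2⟩
    · ext y
      constructor
      · rintro ⟨z, hz, rfl⟩
        rw [hKeq] at hz
        obtain ⟨x, hx, t, ht, rfl⟩ := hz
        simp only [Set.mem_Icc] at ht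
        refine ⟨x, hx, t - Γ x, ?_, hΘim x hx t⟩
        simp only [Set.mem_Icc]
        exact ⟨by linarith [ht.1], by linarith [ht.2]⟩
      · rintro ⟨x, hx, t, ht, rfl⟩
        simp only [Set.mem_Icc] at ht
        refine ⟨(t + Γ x) • c + x, ?_, ?_⟩
        · rw [hKeq]
          refine ⟨x, hx, t + Γ x, ?_, rfl⟩
          simp only [Set.mem_Icc]
          exact ⟨by linarith [ht.1], by linarith [ht.2]⟩
        · rw [hΘim x hx (t + Γ x)]; ring_nf
  · -- derivative of Θ in direction e_j
    intro x
    have hD : HasFDerivAt (fun y : Rn n => Γ (πL y))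
        ((fderiv ℝ Γ (πL x)).comp πL) x :=
      ((hΓ.differentiable (by simp)) (πL x)).hasFDerivAt.comp x
        πL.hasFDerivAt
    have hΘD : HasFDerivAt Θ
        (ContinuousLinearMap.id ℝ (Rn n) -
          ((fderiv ℝ Γ (πL x)).comp πL).smulRight c) x :=
      (hasFDerivAt_id x).sub (hD.smul_const c)
    rw [hΘD.fderiv]
    simp [ContinuousLinearMap.sub_apply, hπe, hc]
    rw [← hc, hπe, map_zero]
  · -- Φ '' (Θ '' K) = K
    rw [Set.image_image]
    simpa using Set.image_congr' (fun y => hRI y) (s := K) ▸ Set.image_id K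
end
end

section
/- Let n ≥ 1, let f : ℝ^{n−1} → ℝ be a smooth function, let K_0 ⊆ ℝ^{n−1} be a nonempty compact set, and let K := {(x_1,…,x_{n−1}, f(x_1,…,x_{n−1})) : (x_1,…,x_{n−1}) ∈ K_0} ⊆ ℝ^n. Then the space of Whitney functions ℰ(K) does not admit a continuous norm; that is, for every continuous seminorm p on ℰ(K) there exists a nonzero element g ∈ ℰ(K) with p(g) = 0. -/
/-
Common setup: the space `C^∞(ℝⁿ,ℂ)` of smooth complex-valued functions on `ℝⁿ`
with the Fréchet topology of uniform convergence of all partial derivatives on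
compact sets, the ideal `𝓘_K` of functions flat on a compact set `K`, and the
space of Whitney functions `ℰ(K) = C^∞(ℝⁿ,ℂ)/𝓘_K` with the quotient topology.
-/

noncomputable section
open scoped ContDiff

open scoped ContDiff

section Aux
variable {E F : Type*} [NormedAddCommGroup E] [NormedSpace ℝ E]
  [NormedAddCommGroup F] [NormedSpace ℝ F]

lemma fderiv_comp_add_const' {g : E → F} (hg : Differentiable ℝ g) (c : E) (x : E) :
    fderiv ℝ (fun y => g (y + c)) x = fderiv ℝ g (x + c) := by
  have h1 : HasFDerivAt (fun y : E => y + c) (ContinuousLinearMap.id ℝ E) x :=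
    (hasFDerivAt_id x).add_const c
  have h2 := ((hg (x + c)).hasFDerivAt.comp x h1)
  simpa [Function.comp_def] using h2.fderiv

lemma iteratedFDeriv_comp_add_const {f : E → F} (hf : ContDiff ℝ ∞ f) (c : E) (n : ℕ) (x : E) :
    iteratedFDeriv ℝ n (fun y => f (y + c)) x = iteratedFDeriv ℝ n f (x + c) := by
  induction n generalizing x with
  | zero => ext m; simp
  | succ n ih =>
    rw [iteratedFDeriv_succ_eq_comp_left, iteratedFDeriv_succ_eq_comp_left]
    have hlt : (n : WithTop ℕ∞) < ∞ := by exact_mod_cast ENat.coe_lt_top n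
    have hd : Differentiable ℝ (iteratedFDeriv ℝ n f) :=
      hf.differentiable_iteratedFDeriv hlt
    simp only [Function.comp_apply]
    congr 1
    have : iteratedFDeriv ℝ n (fun y => f (y + c)) = fun y => iteratedFDeriv ℝ n f (y + c) :=
      funext fun y => ih y
    rw [this, fderiv_comp_add_const' hd c x]

lemma iteratedDeriv_smul_fun {f : ℝ → F} (a : ℝ)
    (n : ℕ) (hf : ContDiff ℝ n f) (x : ℝ) :
    iteratedDeriv n (fun s => a • f s) x = a • iteratedDeriv n f x := by
  have : (fun s => a • f s) = a • f := rfl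
  rw [iteratedDeriv_eq_iteratedFDeriv, iteratedDeriv_eq_iteratedFDeriv, this,
    iteratedFDeriv_const_smul_apply hf.contDiffAt]
  rfl

lemma iteratedDeriv_pow_self (n : ℕ) (x : ℝ) :
    iteratedDeriv n (fun s : ℝ => s ^ n) x = (Nat.factorial n : ℝ) := by
  induction n generalizing x with
  | zero => simp
  | succ n ih =>
    rw [iteratedDeriv_succ']
    have hderiv : (deriv fun s : ℝ => s ^ (n + 1)) = fun s : ℝ => ((n : ℝ) + 1) • s ^ n := by
      funext s
      simp [deriv_pow]
    rw [hderiv, iteratedDeriv_smul_fun (f := fun s : ℝ => s ^ n) _ n (by exact contDiff_id.pow n) x, ih x]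
    push_cast [Nat.factorial_succ]
    rw [smul_eq_mul]

end Aux
open Filter Topology Set
open scoped UniformConvergence

lemma seminorm_bound (n : ℕ) (q : SmoothFun n → ℝ) (hq : Continuous q) (hq0 : q 0 = 0) :
    ∃ (N : ℕ) (L : Set (Rn n)) (δ : ℝ), IsCompact L ∧ 0 < δ ∧
      ∀ F : SmoothFun n, (∀ k ≤ N, ∀ x ∈ L, ‖iteratedFDeriv ℝ k F.1 x‖ < δ) → q F < 1 := by
  classical
  have h0 : {F : SmoothFun n | q F < 1} ∈ 𝓝 (0 : SmoothFun n) := by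
    have ho : IsOpen {F : SmoothFun n | q F < 1} :=
      isOpen_lt hq continuous_const
    exact ho.mem_nhds (by simp [hq0])
  let Φ : SmoothFun n → ∀ k : ℕ, ((Rn n) →ᵤ[{K : Set (Rn n) | IsCompact K}] ((Rn n) [×k]→L[ℝ] ℂ)) :=
    fun F k => UniformOnFun.ofFun {K | IsCompact K} (iteratedFDeriv ℝ k F.1)
  have hnhds : 𝓝 (0 : SmoothFun n) = Filter.comap Φ (𝓝 (Φ 0)) := nhds_induced Φ 0
  have hdir : DirectedOn (· ⊆ ·) {K : Set (Rn n) | IsCompact K} :=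
    fun a ha b hb => ⟨a ∪ b, ha.union hb, Set.subset_union_left, Set.subset_union_right⟩
  have hb : ∀ k : ℕ, (𝓝 (Φ 0 k)).HasBasis
      (fun Si : Set (Rn n) × ℝ => Si.1 ∈ {K : Set (Rn n) | IsCompact K} ∧ 0 < Si.2)
      (fun Si => {g | (g, Φ 0 k) ∈
        UniformOnFun.gen {K : Set (Rn n) | IsCompact K} Si.1 {p | dist p.1 p.2 < Si.2}}) :=
    fun k => UniformOnFun.hasBasis_nhds_of_basis (Rn n) ((Rn n) [×k]→L[ℝ] ℂ)
      {K : Set (Rn n) | IsCompact K} (Φ 0 k) ⟨∅, isCompact_empty⟩ hdir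
      Metric.uniformity_basis_dist
  have hpi : (𝓝 (Φ 0)).HasBasis
      (fun ISE : Set ℕ × (ℕ → Set (Rn n) × ℝ) => ISE.1.Finite ∧ ∀ k ∈ ISE.1,
        (ISE.2 k).1 ∈ {K : Set (Rn n) | IsCompact K} ∧ 0 < (ISE.2 k).2)
      (fun ISE => ISE.1.pi fun k => {g | (g, Φ 0 k) ∈
        UniformOnFun.gen {K : Set (Rn n) | IsCompact K} (ISE.2 k).1
          {p | dist p.1 p.2 < (ISE.2 k).2}}) := by
    rw [nhds_pi]
    exact Filter.hasBasis_pi hb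
  rw [hnhds] at h0
  obtain ⟨⟨I, SE⟩, ⟨hIfin, hISE⟩, hsub⟩ := (hpi.comap Φ).mem_iff.1 h0
  let J : Finset ℕ := hIfin.toFinset
  refine ⟨J.sup id, ⋃ k ∈ I, (SE k).1,
    if hJ : J.Nonempty then J.inf' hJ (fun k => (SE k).2) else 1,
    hIfin.isCompact_biUnion (fun k hk => (hISE k hk).1), ?_, ?_⟩
  · split_ifs with hJ
    · rw [Finset.lt_inf'_iff]
      exact fun k hk => (hISE k (hIfin.mem_toFinset.1 hk)).2
    · exact one_pos
  · intro F hcond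
    apply hsub
    simp only [Set.mem_preimage, Set.mem_pi]
    intro k hk
    have hkJ : k ∈ J := hIfin.mem_toFinset.2 hk
    simp only [Set.mem_setOf_eq, UniformOnFun.gen]
    intro x hx
    have h1 : ‖iteratedFDeriv ℝ k F.1 x‖ < _ :=
      hcond k (Finset.le_sup (f := id) hkJ) x (Set.mem_biUnion hk hx)
    have h2 : (if hJ : J.Nonempty then J.inf' hJ (fun k => (SE k).2) else 1) ≤ (SE k).2 := by
      rw [dif_pos ⟨k, hkJ⟩]
      exact Finset.inf'_le _ hkJ
    have h3 : ‖iteratedFDeriv ℝ k F.1 x‖ < (SE k).2 := lt_of_lt_of_le h1 h2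
    show dist (UniformOnFun.toFun _ (Φ F k) x) (UniformOnFun.toFun _ (Φ 0 k) x) < (SE k).2
    simp only [Φ, UniformOnFun.toFun_ofFun]
    have hz : ((0 : SmoothFun n) : Rn n → ℂ) = (fun _ => 0) := rfl
    rw [hz, iteratedFDeriv_zero_fun]
    simpa [dist_eq_norm] using h3
section Geom
open Filter Topology

/-- The "normal coordinate" `t(x) = xₙ - f(x')`. -/
def tmap (m : ℕ) (f : Rn m → ℝ) : Rn (m + 1) → ℝ :=
  fun x => x (Fin.last m) - f (fun l => x l.castSucc)

variable {m : ℕ} {f : Rn m → ℝ}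

lemma tmap_smooth (hf : ContDiff ℝ ∞ f) : ContDiff ℝ ∞ (tmap m f) := by
  have h1 : ContDiff ℝ ∞ (fun x : Rn (m+1) => x (Fin.last m)) :=
    (ContinuousLinearMap.proj (R := ℝ) (φ := fun _ : Fin (m+1) => ℝ) (Fin.last m)).contDiff
  have h2 : ContDiff ℝ ∞ (fun x : Rn (m+1) => (fun l : Fin m => x l.castSucc)) :=
    (ContinuousLinearMap.pi (fun l : Fin m =>
      ContinuousLinearMap.proj (R := ℝ) (φ := fun _ : Fin (m+1) => ℝ) l.castSucc)).contDiff
  exact h1.sub (hf.comp h2)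

lemma tmap_graph (x' : Rn m) :
    tmap m f (fun i => Fin.lastCases (f x') (fun l => x' l) i) = 0 := by
  unfold tmap
  simp

lemma tmap_line (x' : Rn m) (s : ℝ) :
    tmap m f (s • (Pi.single (Fin.last m) 1 : Rn (m+1)) +
      ((fun i => Fin.lastCases (f x') (fun l => x' l) i) : Rn (m+1))) = s := by
  unfold tmap
  set y : Rn (m+1) := (fun i => Fin.lastCases (f x') (fun l => x' l) i) with hy
  have h1 : (s • (Pi.single (Fin.last m) 1 : Rn (m+1)) + y) (Fin.last m) = s + f x' := by
    simp [hy]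
  have h2 : (fun l : Fin m => (s • (Pi.single (Fin.last m) 1 : Rn (m+1)) + y) l.castSucc)
      = x' := by
    funext l
    have hne : (l.castSucc : Fin (m+1)) ≠ Fin.last m := (Fin.castSucc_lt_last l).ne
    simp [hy, Pi.single_eq_of_ne hne]
  rw [h1, h2]
  ring
end Geom
section Hfun
open Filter Topology

/-- A smooth bump on `ℝ`: equal to `1` on `[-1,1]`, supported in `[-2,2]`. -/
def bmp : ContDiffBump (0 : ℝ) := ⟨1, 2, one_pos, one_lt_two⟩

/-- The compactly supported model function `u ↦ χ(u)·u^{N+1}` (complex valued). -/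
def hfun (N : ℕ) : ℝ → ℂ := fun u => ((bmp u * u ^ (N + 1) : ℝ) : ℂ)

lemma hfun_smooth (N : ℕ) : ContDiff ℝ ∞ (hfun N) := by
  have h1 : ContDiff ℝ ∞ (fun u : ℝ => bmp u * u ^ (N + 1)) :=
    bmp.contDiff.mul (contDiff_id.pow _)
  exact Complex.ofRealCLM.contDiff.comp h1

lemma hfun_supp (N : ℕ) : HasCompactSupport (hfun N) := by
  have h1 : HasCompactSupport (fun u : ℝ => bmp u * u ^ (N + 1)) :=
    bmp.hasCompactSupport.mul_right
  exact h1.comp_left (g := fun r : ℝ => (r : ℂ)) (by simp)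

lemma hfun_eq {N : ℕ} {u : ℝ} (h : |u| ≤ 1) : hfun N u = ((u ^ (N + 1) : ℝ) : ℂ) := by
  have hb : bmp u = 1 := by
    apply bmp.one_of_mem_closedBall
    simpa [Real.dist_eq, bmp] using h
  simp [hfun, hb]
end Hfun
section Est
open Filter Topology

/-- Derivative bounds for the rescaled model function. -/
lemma hl_bound (N : ℕ) (C₀ : ℝ)
    (hC₀ : ∀ k ≤ N, ∀ u : ℝ, ‖iteratedFDeriv ℝ k (hfun N) u‖ ≤ C₀)
    (c : ℝ) (hc : 1 ≤ c) (j : ℕ) (hj : j ≤ N) (u : ℝ) :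
    ‖iteratedFDeriv ℝ j (fun v => (c ^ (N + 1))⁻¹ • hfun N (c * v)) u‖ ≤ C₀ / c := by
  have hc0 : (0 : ℝ) < c := lt_of_lt_of_le one_pos hc
  have hC₀0 : 0 ≤ C₀ := le_trans (norm_nonneg _) (hC₀ 0 (Nat.zero_le N) 0)
  have hjle : ((j : ℕ∞) : WithTop ℕ∞) ≤ ∞ := by exact_mod_cast le_top
  have hsm : ContDiff ℝ (j : ℕ∞) ((c ^ (N + 1))⁻¹ • hfun N) := by
    have := ((hfun_smooth N).of_le hjle).const_smul ((c ^ (N + 1))⁻¹ : ℝ)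
    exact this
  have e0 : (fun v => (c ^ (N + 1))⁻¹ • hfun N (c * v))
      = fun v => ((c ^ (N + 1))⁻¹ • hfun N) (c * v) := rfl
  rw [norm_iteratedFDeriv_eq_norm_iteratedDeriv, e0,
    iteratedDeriv_comp_const_smul hsm c]
  have e1 : iteratedDeriv j ((c ^ (N + 1))⁻¹ • hfun N) (c * u)
      = (c ^ (N + 1))⁻¹ • iteratedDeriv j (hfun N) (c * u) :=
    iteratedDeriv_smul_fun _ j ((hfun_smooth N).of_le hjle) _
  show ‖c ^ j • iteratedDeriv j ((c ^ (N + 1))⁻¹ • hfun N) (c * u)‖ ≤ C₀ / c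
  rw [e1, norm_smul, norm_smul]
  have h2 : ‖iteratedDeriv j (hfun N) (c * u)‖ ≤ C₀ := by
    rw [← norm_iteratedFDeriv_eq_norm_iteratedDeriv]
    exact hC₀ j hj _
  have h3 : ‖(c : ℝ) ^ j‖ = c ^ j := by
    rw [Real.norm_eq_abs, abs_of_pos (pow_pos hc0 j)]
  have h4 : ‖((c : ℝ) ^ (N + 1))⁻¹‖ = (c ^ (N + 1))⁻¹ := by
    rw [Real.norm_eq_abs, abs_of_pos (inv_pos.2 (pow_pos hc0 _))]
  rw [h3, h4]
  have h5 : c ^ j * (c ^ (N + 1))⁻¹ ≤ c⁻¹ := by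
    rw [pow_succ, mul_inv, ← mul_assoc]
    have h6 : c ^ j * (c ^ N)⁻¹ ≤ 1 := by
      rw [mul_inv_le_iff₀ (pow_pos hc0 N), one_mul]
      exact pow_le_pow_right₀ hc hj
    calc c ^ j * (c ^ N)⁻¹ * c⁻¹ ≤ 1 * c⁻¹ :=
          mul_le_mul_of_nonneg_right h6 (inv_nonneg.2 hc0.le)
      _ = c⁻¹ := one_mul _
  calc c ^ j * ((c ^ (N + 1))⁻¹ * ‖iteratedDeriv j (hfun N) (c * u)‖)
      = c ^ j * (c ^ (N + 1))⁻¹ * ‖iteratedDeriv j (hfun N) (c * u)‖ := by ring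
    _ ≤ c⁻¹ * C₀ := by
        apply mul_le_mul h5 h2 (norm_nonneg _)
        exact inv_nonneg.2 hc0.le
    _ = C₀ / c := by rw [div_eq_mul_inv, mul_comm]

end Est
section FlatNonzero
open Filter Topology

lemma flat_diff (m N : ℕ) (f : Rn m → ℝ) (hf : ContDiff ℝ ∞ f) (c : ℝ) (hc : 1 ≤ c)
    (y : Rn (m + 1)) (hy : tmap m f y = 0) (k : ℕ) :
    iteratedFDeriv ℝ k (fun x => (c ^ (N + 1))⁻¹ • hfun N (c * tmap m f x)
      - ((tmap m f x ^ (N + 1) : ℝ) : ℂ)) y = 0 := by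
  have hc0 : (0 : ℝ) < c := lt_of_lt_of_le one_pos hc
  have hopen : IsOpen {z : Rn (m + 1) | |c * tmap m f z| < 1} :=
    isOpen_lt (continuous_abs.comp
      (continuous_const.mul (tmap_smooth hf).continuous)) continuous_const
  have hyU : y ∈ {z : Rn (m + 1) | |c * tmap m f z| < 1} := by simp [hy]
  have hev : (fun x => (c ^ (N + 1))⁻¹ • hfun N (c * tmap m f x)
      - ((tmap m f x ^ (N + 1) : ℝ) : ℂ)) =ᶠ[𝓝 y] (fun _ => (0 : ℂ)) := by
    filter_upwards [hopen.mem_nhds hyU] with z hz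
    have h1 : hfun N (c * tmap m f z) = (((c * tmap m f z) ^ (N + 1) : ℝ) : ℂ) :=
      hfun_eq (le_of_lt hz)
    rw [h1, sub_eq_zero]
    have h2 : (c ^ (N + 1))⁻¹ • ((((c * tmap m f z) ^ (N + 1) : ℝ)) : ℂ)
        = (((c ^ (N + 1))⁻¹ * (c * tmap m f z) ^ (N + 1) : ℝ) : ℂ) := by
      rw [Complex.real_smul, Complex.ofReal_mul]
    rw [h2]
    congr 1
    rw [mul_pow]
    field_simp
  rw [← iteratedFDerivWithin_univ]
  have hev' : (fun x => (c ^ (N + 1))⁻¹ • hfun N (c * tmap m f x)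
      - ((tmap m f x ^ (N + 1) : ℝ) : ℂ)) =ᶠ[𝓝[Set.univ] y] (fun _ => (0 : ℂ)) := by
    rw [nhdsWithin_univ]; exact hev
  rw [hev'.iteratedFDerivWithin_eq hev.eq_of_nhds k, iteratedFDerivWithin_univ]
  rw [iteratedFDeriv_zero_fun]
  rfl

lemma Ffun_not_flat (m N : ℕ) (f : Rn m → ℝ) (hf : ContDiff ℝ ∞ f) (x' : Rn m) :
    iteratedFDeriv ℝ (N + 1) (fun x => ((tmap m f x ^ (N + 1) : ℝ) : ℂ))
      ((fun i => Fin.lastCases (f x') (fun l => x' l) i : Rn (m + 1))) ≠ 0 := by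
  intro h0
  set x₀ : Rn (m + 1) := (fun i => Fin.lastCases (f x') (fun l => x' l) i) with hx₀
  set Ff : Rn (m + 1) → ℂ := fun x => ((tmap m f x ^ (N + 1) : ℝ) : ℂ) with hFf
  have hFs : ContDiff ℝ ∞ Ff :=
    Complex.ofRealCLM.contDiff.comp ((tmap_smooth hf).pow _)
  have h1 : iteratedFDeriv ℝ (N + 1) (fun y => Ff (y + x₀)) 0 = 0 := by
    rw [iteratedFDeriv_comp_add_const hFs x₀ (N + 1) 0, zero_add]
    exact h0
  set A : ℝ →L[ℝ] Rn (m + 1) :=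
    (ContinuousLinearMap.id ℝ ℝ).smulRight (Pi.single (Fin.last m) 1) with hA
  have hFτ : ContDiff ℝ ∞ (fun y => Ff (y + x₀)) :=
    hFs.comp (contDiff_id.add contDiff_const)
  have hle : ((N + 1 : ℕ) : WithTop ℕ∞) ≤ ∞ := by exact_mod_cast le_top
  have h2 : iteratedFDeriv ℝ (N + 1) ((fun y => Ff (y + x₀)) ∘ A) 0 = 0 := by
    rw [A.iteratedFDeriv_comp_right hFτ 0 hle, map_zero, h1]
    ext mm
    simp
  have hcomp : ((fun y => Ff (y + x₀)) ∘ A) = fun s : ℝ => ((s ^ (N + 1) : ℝ) : ℂ) := by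
    funext s
    have hAs : A s = s • (Pi.single (Fin.last m) 1 : Rn (m + 1)) := by
      simp [hA]
    show Ff (A s + x₀) = _
    rw [hFf, hAs, hx₀]
    have htl := tmap_line (f := f) x' s
    simp only []
    rw [htl]
  have hpow : ContDiff ℝ ∞ (fun s : ℝ => s ^ (N + 1)) := by
    exact contDiff_id.pow _
  have h3 : ‖iteratedFDeriv ℝ (N + 1) (fun s : ℝ => ((s ^ (N + 1) : ℝ) : ℂ)) 0‖
      = (Nat.factorial (N + 1) : ℝ) := by
    have hiso : (fun s : ℝ => ((s ^ (N + 1) : ℝ) : ℂ))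
        = (⇑Complex.ofRealLI ∘ fun s : ℝ => s ^ (N + 1)) := rfl
    rw [hiso, Complex.ofRealLI.norm_iteratedFDeriv_comp_left (x := 0) hpow.contDiffAt hle,
      norm_iteratedFDeriv_eq_norm_iteratedDeriv, iteratedDeriv_pow_self,
      Real.norm_eq_abs, abs_of_nonneg (Nat.cast_nonneg _)]
  rw [hcomp] at h2
  rw [h2, norm_zero] at h3
  exact Nat.cast_ne_zero.2 (Nat.factorial_pos _).ne' h3.symm

end FlatNonzero

/-- (With `m = n - 1`, `n ≥ 1`.) Let `f : ℝᵐ → ℝ` be smooth,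
let `K₀ ⊆ ℝᵐ` be a nonempty compact set, and let
`K = {(x, f(x)) : x ∈ K₀} ⊆ ℝ^{m+1}` be the corresponding graph. Then `ℰ(K)`
admits no continuous norm: every continuous seminorm on `ℰ(K)` vanishes at some
nonzero element. -/
theorem stmt17 (m : ℕ) (f : Rn m → ℝ) (hf : ContDiff ℝ ∞ f)
    (K₀ : Set (Rn m)) (hK₀c : IsCompact K₀) (hK₀ne : K₀.Nonempty)
    (K : Set (Rn (m + 1)))
    (hK : K = (fun x : Rn m =>
      (fun i : Fin (m + 1) => Fin.lastCases (f x) (fun l : Fin m => x l) i)) '' K₀) :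
    ∀ p : Seminorm ℂ (WhitneyE (m + 1) K), Continuous p →
      ∃ g : WhitneyE (m + 1) K, g ≠ 0 ∧ p g = 0 := by
  intro p hp
  classical
  obtain ⟨x₀', hx₀'⟩ := hK₀ne
  -- the induced continuous seminorm on `C^∞`
  set q : SmoothFun (m + 1) → ℝ :=
    fun F => p (Submodule.Quotient.mk F) with hqdef
  have hmkc : Continuous (fun F : SmoothFun (m + 1) =>
      (Submodule.Quotient.mk F : WhitneyE (m + 1) K)) := continuous_quot_mk
  have hqc : Continuous q := hp.comp hmkc
  have hq0 : q 0 = 0 := by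
    simp only [hqdef]
    rw [show (Submodule.Quotient.mk (0 : SmoothFun (m + 1)) : WhitneyE (m + 1) K) = 0 from
      Submodule.Quotient.mk_zero _]
    exact map_zero p
  obtain ⟨N, L, δ, hL, hδ, hbound⟩ := seminorm_bound (m + 1) q hqc hq0
  have hts : ContDiff ℝ ∞ (tmap m f) := tmap_smooth hf
  -- global bounds on the derivatives of `hfun N`
  obtain ⟨C₀, hC₀1, hC₀⟩ : ∃ C₀ : ℝ, 1 ≤ C₀ ∧
      ∀ k ≤ N, ∀ u : ℝ, ‖iteratedFDeriv ℝ k (hfun N) u‖ ≤ C₀ := by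
    have hhb : ∀ k : ℕ, ∃ C, ∀ u : ℝ, ‖iteratedFDeriv ℝ k (hfun N) u‖ ≤ C := by
      intro k
      have hkle : ((k : ℕ∞) : WithTop ℕ∞) ≤ ∞ := by exact_mod_cast le_top
      exact ((hfun_supp N).iteratedFDeriv k).exists_bound_of_continuous
        ((hfun_smooth N).continuous_iteratedFDeriv hkle)
    choose Bh hBh using hhb
    refine ⟨max 1 ((Finset.range (N + 1)).sup' ⟨0, by simp⟩ Bh), le_max_left _ _, ?_⟩
    intro k hk u
    exact (hBh k u).trans ((Finset.le_sup' Bh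
      (Finset.mem_range.2 (Nat.lt_succ_of_le hk))).trans (le_max_right _ _))
  -- bounds on the derivatives of `tmap` on `L`
  obtain ⟨D, hD1, hDb⟩ : ∃ D : ℝ, 1 ≤ D ∧ ∀ k, 1 ≤ k → k ≤ N →
      ∀ x ∈ L, ‖iteratedFDeriv ℝ k (tmap m f) x‖ ≤ D ^ k := by
    have htb : ∀ k : ℕ, ∃ C, ∀ x ∈ L, ‖iteratedFDeriv ℝ k (tmap m f) x‖ ≤ C := by
      intro k
      have hkle : ((k : ℕ∞) : WithTop ℕ∞) ≤ ∞ := by exact_mod_cast le_top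
      exact hL.exists_bound_of_continuousOn
        ((hts.continuous_iteratedFDeriv hkle).continuousOn)
    choose Dt hDt using htb
    refine ⟨max 1 ((Finset.range (N + 1)).sup' ⟨0, by simp⟩ Dt), le_max_left _ _, ?_⟩
    intro k h1 h2 x hx
    have h3 : Dt k ≤ max 1 ((Finset.range (N + 1)).sup' ⟨0, by simp⟩ Dt) :=
      (Finset.le_sup' Dt (Finset.mem_range.2 (Nat.lt_succ_of_le h2))).trans (le_max_right _ _)
    exact (hDt k x hx).trans (h3.trans (le_self_pow₀ (le_max_left _ _) (by omega)))
  -- the elements of `C^∞`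
  have hGs : ∀ c : ℝ, ContDiff ℝ ∞
      (fun y => (c ^ (N + 1))⁻¹ • hfun N (c * tmap m f y)) := by
    intro c
    have h1 : ContDiff ℝ ∞ (fun y => hfun N (c * tmap m f y)) :=
      (hfun_smooth N).comp (contDiff_const.mul hts)
    exact h1.const_smul _
  have hFs : ContDiff ℝ ∞ (fun x => ((tmap m f x ^ (N + 1) : ℝ) : ℂ)) :=
    Complex.ofRealCLM.contDiff.comp (hts.pow _)
  let Fc : SmoothFun (m + 1) := ⟨fun x => ((tmap m f x ^ (N + 1) : ℝ) : ℂ), hFs⟩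
  let Gc : ℝ → SmoothFun (m + 1) := fun c =>
    ⟨fun y => (c ^ (N + 1))⁻¹ • hfun N (c * tmap m f y), hGs c⟩
  -- the Faà di Bruno estimate
  have hGest : ∀ c : ℝ, 1 ≤ c → ∀ k ≤ N, ∀ x ∈ L,
      ‖iteratedFDeriv ℝ k (Gc c).1 x‖ ≤ (Nat.factorial N : ℝ) * C₀ * D ^ N / c := by
    intro c hc k hk x hx
    have hc0 : (0 : ℝ) < c := lt_of_lt_of_le one_pos hc
    have hkle : ((k : ℕ) : WithTop ℕ∞) ≤ ∞ := by exact_mod_cast le_top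
    have hg1 : ContDiff ℝ ∞ (fun v : ℝ => hfun N (c * v)) :=
      (hfun_smooth N).comp (contDiff_const.mul contDiff_id)
    have hg : ContDiff ℝ ∞ (fun v : ℝ => (c ^ (N + 1))⁻¹ • hfun N (c * v)) :=
      hg1.const_smul _
    have hcomp := norm_iteratedFDeriv_comp_le (𝕜 := ℝ)
      (g := fun v : ℝ => (c ^ (N + 1))⁻¹ • hfun N (c * v)) (f := tmap m f)
      hg hts hkle x
      (C := C₀ / c) (D := D)
      (fun i hi => hl_bound N C₀ hC₀ c hc i (hi.trans hk) (tmap m f x))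
      (fun i h1 h2 => hDb i h1 (h2.trans hk) x hx)
    have heq : (fun v : ℝ => (c ^ (N + 1))⁻¹ • hfun N (c * v)) ∘ (tmap m f)
        = (Gc c).1 := rfl
    rw [heq] at hcomp
    refine hcomp.trans ?_
    have e : (Nat.factorial N : ℝ) * C₀ * D ^ N / c
        = (Nat.factorial N : ℝ) * (C₀ / c) * D ^ N := by ring
    rw [e]
    have h1 : (Nat.factorial k : ℝ) ≤ (Nat.factorial N : ℝ) := by
      exact_mod_cast Nat.factorial_le hk
    have h2 : D ^ k ≤ D ^ N := pow_le_pow_right₀ hD1 hk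
    have h3 : (0 : ℝ) ≤ C₀ / c := div_nonneg (le_trans zero_le_one hC₀1) hc0.le
    calc (Nat.factorial k : ℝ) * (C₀ / c) * D ^ k
        ≤ (Nat.factorial N : ℝ) * (C₀ / c) * D ^ k :=
          mul_le_mul_of_nonneg_right (mul_le_mul_of_nonneg_right h1 h3)
            (pow_nonneg (zero_le_one.trans hD1) k)
      _ ≤ (Nat.factorial N : ℝ) * (C₀ / c) * D ^ N :=
          mul_le_mul_of_nonneg_left h2 (mul_nonneg (Nat.cast_nonneg _) h3)
  -- all the `Gc c` represent the same Whitney function as `Fc`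
  have hmem : ∀ c : ℝ, 1 ≤ c → Gc c - Fc ∈ IdealK (m + 1) K := by
    intro c hc k y hy
    have hty : tmap m f y = 0 := by
      rw [hK] at hy
      obtain ⟨x', hx', rfl⟩ := hy
      exact tmap_graph x'
    show iteratedFDeriv ℝ k ((Gc c - Fc : SmoothFun (m + 1)) : Rn (m + 1) → ℂ) y = 0
    have heq : ((Gc c - Fc : SmoothFun (m + 1)) : Rn (m + 1) → ℂ)
        = fun x => (c ^ (N + 1))⁻¹ • hfun N (c * tmap m f x)
          - ((tmap m f x ^ (N + 1) : ℝ) : ℂ) := rfl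
    rw [heq]
    exact flat_diff m N f hf c hc y hty k
  -- `Fc` is not flat on `K`
  set x₀ : Rn (m + 1) := (fun i => Fin.lastCases (f x₀') (fun l => x₀' l) i) with hx₀def
  have hx₀K : x₀ ∈ K := by rw [hK]; exact ⟨x₀', hx₀', rfl⟩
  have hFne : Fc ∉ IdealK (m + 1) K := by
    intro hmemF
    exact Ffun_not_flat m N f hf x₀' (hmemF (N + 1) x₀ hx₀K)
  refine ⟨Submodule.Quotient.mk Fc, ?_, ?_⟩
  · simpa [Submodule.Quotient.mk_eq_zero] using hFne
  · have hple : ∀ M : ℕ, 0 < M → p (Submodule.Quotient.mk Fc) ≤ 1 / M := by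
      intro M hM
      set E : ℝ := (Nat.factorial N : ℝ) * C₀ * D ^ N with hE
      have hE0 : (0 : ℝ) < E :=
        mul_pos (mul_pos (by exact_mod_cast Nat.factorial_pos N)
          (lt_of_lt_of_le one_pos hC₀1)) (pow_pos (lt_of_lt_of_le one_pos hD1) N)
      set c : ℝ := max 1 ((M * E) / δ + 1) with hcdef
      have hc1 : 1 ≤ c := le_max_left _ _
      have hc0 : (0 : ℝ) < c := lt_of_lt_of_le one_pos hc1
      have hM0 : (0 : ℝ) < (M : ℝ) := by exact_mod_cast hM
      have hkey : (M : ℝ) * (E / c) < δ := by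
        have hgt : (M * E) / δ < c := lt_of_lt_of_le (lt_add_one _) (le_max_right _ _)
        rw [div_lt_iff₀ hδ] at hgt
        have e1 : (M : ℝ) * (E / c) = (M * E) / c := by ring
        rw [e1, div_lt_iff₀ hc0]
        nlinarith
      have hq1 : q ((M : ℂ) • Gc c) < 1 := by
        apply hbound
        intro k hk x hx
        have hsm : (((M : ℂ) • Gc c : SmoothFun (m + 1)) : Rn (m + 1) → ℂ)
            = (M : ℂ) • ((Gc c : SmoothFun (m + 1)) : Rn (m + 1) → ℂ) := rfl
        rw [hsm, iteratedFDeriv_const_smul_apply ((Gc c).smoothNat k).contDiffAt,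
          norm_smul ((M : ℕ) : ℂ) (iteratedFDeriv ℝ k ((Gc c) : Rn (m + 1) → ℂ) x)]
        have hnc : ‖((M : ℕ) : ℂ)‖ = (M : ℝ) := by
          rw [Complex.norm_natCast]
        rw [hnc]
        calc (M : ℝ) * ‖iteratedFDeriv ℝ k (Gc c).1 x‖
            ≤ (M : ℝ) * (E / c) := by
              apply mul_le_mul_of_nonneg_left _ (Nat.cast_nonneg M)
              have h4 := hGest c hc1 k hk x hx
              rw [hE]
              exact h4
          _ < δ := hkey
      have e1 : q ((M : ℂ) • Gc c) = (M : ℝ) * q (Gc c) := by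
        simp only [hqdef]
        rw [show (Submodule.Quotient.mk ((M : ℂ) • Gc c) : WhitneyE (m + 1) K)
          = (M : ℂ) • (Submodule.Quotient.mk (Gc c) : WhitneyE (m + 1) K) from
          Submodule.Quotient.mk_smul _ _ _]
        rw [map_smul_eq_mul, Complex.norm_natCast]
      have e2 : q (Gc c) = p (Submodule.Quotient.mk Fc) := by
        simp only [hqdef]
        congr 1
        rw [Submodule.Quotient.eq]
        exact hmem c hc1
      rw [e1, e2] at hq1
      rw [le_div_iff₀ hM0]
      rw [mul_comm] at hq1
      linarith
    refine le_antisymm ?_ (apply_nonneg p _)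
    by_contra hpos
    push_neg at hpos
    obtain ⟨M, hM⟩ := exists_nat_one_div_lt hpos
    have h5 := hple (M + 1) (Nat.succ_pos M)
    have hcast : (((M + 1 : ℕ)) : ℝ) = (M : ℝ) + 1 := by push_cast; ring
    rw [hcast] at h5
    linarith
end
end
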